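/- arXiv:1604.07683 — 6 statements merged into one kernel-verified Lean document; each statement's English description precedes it below -/
import Mathlib

section
/- Let f ∈ K[x,y] be monic in y with deg_y f = m, let ξ ∈ K, and suppose f(t^{-1}, y) − ξ = ∏_{i=1}^{m} (y − α_i) in (HahnSeries ℚ K)[y] for some α₁, …, α_m ∈ HahnSeries ℚ K. Let δ ∈ ℚ, let s ∈ HahnSeries ℚ K have support contained in {j ∈ ℚ : j < δ}, and let σ = s + π·t^δ, an element of HahnSeries ℚ (K[π]) (where π is an indeterminate, t^δ is the Hahn series with single coefficient 1 at exponent δ, and HahnSeries ℚ K is embedded coefficientwise into HahnSeries ℚ (K[π])). Suppose the element f(t^{-1}, σ) − ξ of HahnSeries ℚ (K[π]) has order λ_σ and its coefficient at λ_σ is a polynomial f_σ(π) ∈ K[π] with deg_π f_σ ≥ 1. Then the element f_y(t^{-1}, σ) of HahnSeries ℚ (K[π]) has coefficient 0 at every exponent strictly less than λ_σ − δ, and its coefficient at exponent λ_σ − δ equals the derivative f_σ′(π). -/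
open Polynomial

noncomputable section

/-- The Hahn series `t^δ` over a coefficient ring `R`: single coefficient `1` at exponent `δ`. -/
def tpow (R : Type*) [CommRing R] (δ : ℚ) : HahnSeries ℚ R := HahnSeries.single δ 1

/-- Coefficientwise embedding of `HahnSeries ℚ K` into `HahnSeries ℚ K[π]`. -/
def embC {K : Type*} [CommRing K] (s : HahnSeries ℚ K) : HahnSeries ℚ (Polynomial K) :=
  s.map (Polynomial.C : K →+* Polynomial K)

/-- Evaluation of a two-variable polynomial `f ∈ K[x][y]` (inner variable `x`, outer
variable `y`) at `x = u`, `y = v` in a commutative ring extension `A` of `K`. -/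
def evalxy {K A : Type*} [CommRing K] [CommRing A] (φ : K →+* A) (u v : A)
    (f : Polynomial (Polynomial K)) : A :=
  Polynomial.eval₂ (Polynomial.eval₂RingHom φ u) v f

namespace HSDeriv

variable {K : Type*} [Field K]

/-- Coefficientwise `d/dπ` on Hahn series over `K[π]`. -/
def D (x : HahnSeries ℚ (Polynomial K)) : HahnSeries ℚ (Polynomial K) :=
  x.map (Polynomial.derivative (R := K) : Polynomial K →ₗ[K] Polynomial K)

@[simp] lemma D_coeff (x : HahnSeries ℚ (Polynomial K)) (q : ℚ) :
    (D x).coeff q = Polynomial.derivative (x.coeff q) := rfl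

lemma D_add (x y : HahnSeries ℚ (Polynomial K)) : D (x + y) = D x + D y := by
  ext q; simp [HahnSeries.coeff_add]

lemma D_sub (x y : HahnSeries ℚ (Polynomial K)) : D (x - y) = D x - D y := by
  ext q; simp [HahnSeries.coeff_sub]

lemma D_support_subset (x : HahnSeries ℚ (Polynomial K)) :
    (D x).support ⊆ x.support := by
  intro q hq
  simp only [HahnSeries.mem_support, D_coeff] at hq ⊢
  intro h; apply hq; rw [h]; simp

lemma D_mul (x y : HahnSeries ℚ (Polynomial K)) : D (x * y) = D x * y + x * D y := by
  ext q
  rw [HahnSeries.coeff_add, D_coeff, HahnSeries.coeff_mul,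
    HahnSeries.coeff_mul_left' x.isPWO_support (D_support_subset x),
    HahnSeries.coeff_mul_right' y.isPWO_support (D_support_subset y),
    ← Finset.sum_add_distrib]
  simp [Polynomial.derivative_mul]

lemma D_single (δ : ℚ) (r : Polynomial K) :
    D (HahnSeries.single δ r) = HahnSeries.single δ (Polynomial.derivative r) := by
  ext q
  by_cases h : q = δ <;> simp [HahnSeries.coeff_single, h]

lemma D_HC (p : Polynomial K) :
    D ((HahnSeries.C : Polynomial K →+* HahnSeries ℚ (Polynomial K)) p)
      = (HahnSeries.C : Polynomial K →+* HahnSeries ℚ (Polynomial K))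
          (Polynomial.derivative p) := by
  rw [HahnSeries.C_apply, HahnSeries.C_apply, D_single]

lemma D_pow (σ : HahnSeries ℚ (Polynomial K)) : ∀ n : ℕ,
    D (σ ^ (n + 1)) = ((n : HahnSeries ℚ (Polynomial K)) + 1) * σ ^ n * D σ
  | 0 => by rw [pow_one, pow_zero]; push_cast; ring
  | n + 1 => by
    rw [pow_succ, D_mul, D_pow σ n]
    push_cast
    ring

lemma D_eval₂ (ψ : Polynomial K →+* HahnSeries ℚ (Polynomial K))
    (hψ : ∀ a, D (ψ a) = 0) (σ : HahnSeries ℚ (Polynomial K))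
    (f : Polynomial (Polynomial K)) :
    D (Polynomial.eval₂ ψ σ f)
      = Polynomial.eval₂ ψ σ (Polynomial.derivative f) * D σ := by
  induction f using Polynomial.induction_on with
  | C a => simp [hψ]
  | add p q hp hq => rw [eval₂_add, D_add, derivative_add, eval₂_add, hp, hq, add_mul]
  | monomial n a ih =>
    rw [eval₂_mul, eval₂_C, eval₂_X_pow, D_mul, hψ, D_pow]
    rw [derivative_C_mul, Polynomial.derivative_X_pow, eval₂_mul, eval₂_C]
    simp only [eval₂_mul, eval₂_natCast, eval₂_X_pow, Nat.cast_add, Nat.cast_one,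
      Nat.add_sub_cancel, eval₂_C, eval₂_add, eval₂_one, map_add, map_one, map_natCast]
    ring

lemma D_psi (a : Polynomial K) :
    D (Polynomial.eval₂RingHom
        ((HahnSeries.C : Polynomial K →+* HahnSeries ℚ (Polynomial K)).comp
          (Polynomial.C : K →+* Polynomial K)) (tpow (Polynomial K) (-1)) a) = 0 := by
  induction a using Polynomial.induction_on with
  | C k =>
    rw [coe_eval₂RingHom, eval₂_C, RingHom.comp_apply, D_HC]
    simp
  | add p q hp hq => rw [map_add, D_add, hp, hq, add_zero]
  | monomial n k ih =>
    rw [map_mul] at ih ⊢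
    rw [pow_succ, map_mul, ← mul_assoc, D_mul, ih, zero_mul, zero_add]
    have : D ((Polynomial.eval₂RingHom
        ((HahnSeries.C : Polynomial K →+* HahnSeries ℚ (Polynomial K)).comp
          (Polynomial.C : K →+* Polynomial K)) (tpow (Polynomial K) (-1))) X) = 0 := by
      rw [coe_eval₂RingHom, eval₂_X]
      unfold tpow
      rw [D_single]
      simp
    rw [this, mul_zero]

lemma D_sigma (δ : ℚ) (s : HahnSeries ℚ K) :
    D (embC s + HahnSeries.single δ (Polynomial.X : Polynomial K))
      = HahnSeries.single δ (1 : Polynomial K) := by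
  rw [D_add, D_single, Polynomial.derivative_X]
  have : D (embC s) = 0 := by
    ext q
    simp [embC, D_coeff]
  rw [this, zero_add]

end HSDeriv

/-- Proposition 3.3(i): if `f_ξ(t⁻¹, y) = ∏ (y − αᵢ)` over the Hahn/Puiseux field, and
`σ = s + π t^δ` is a `π`-root such that `f_ξ(t⁻¹, σ)` has order `λ_σ` with coefficient
`f_σ(π)` of degree `≥ 1` there, then `f_y(t⁻¹, σ) = f_σ′(π) t^{λ_σ − δ} + ⋯`. -/
theorem fy_pi_root_leading_coeff {K : Type*} [Field K] [IsAlgClosed K] [CharZero K]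
    (f : Polynomial (Polynomial K)) (m : ℕ) (hmonic : f.Monic) (hdeg : f.natDegree = m)
    (ξ : K) (α : Fin m → HahnSeries ℚ K)
    (hfact :
      (f.map (Polynomial.eval₂RingHom
          ((HahnSeries.C : K →+* HahnSeries ℚ K)) (tpow K (-1))) :
        Polynomial (HahnSeries ℚ K)) - Polynomial.C ((HahnSeries.C : K →+* HahnSeries ℚ K) ξ)
        = ∏ i, (Polynomial.X - Polynomial.C (α i)))
    (δ : ℚ) (s : HahnSeries ℚ K) (hs : s.support ⊆ {j : ℚ | j < δ})
    (σ : HahnSeries ℚ (Polynomial K))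
    (hσ : σ = embC s + HahnSeries.single δ (Polynomial.X : Polynomial K))
    (lam : ℚ) (fσ : Polynomial K)
    (hfσ : fσ = (evalxy ((HahnSeries.C : Polynomial K →+* HahnSeries ℚ (Polynomial K)).comp
        (Polynomial.C : K →+* Polynomial K)) (tpow (Polynomial K) (-1)) σ f
        - (HahnSeries.C : Polynomial K →+* HahnSeries ℚ (Polynomial K))
            (Polynomial.C ξ)).coeff lam)
    (hbelow : ∀ q < lam,
      (evalxy ((HahnSeries.C : Polynomial K →+* HahnSeries ℚ (Polynomial K)).comp
        (Polynomial.C : K →+* Polynomial K)) (tpow (Polynomial K) (-1)) σ f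
        - (HahnSeries.C : Polynomial K →+* HahnSeries ℚ (Polynomial K))
            (Polynomial.C ξ)).coeff q = 0)
    (hdegfσ : 1 ≤ fσ.natDegree) :
    (∀ q < lam - δ,
      (evalxy ((HahnSeries.C : Polynomial K →+* HahnSeries ℚ (Polynomial K)).comp
        (Polynomial.C : K →+* Polynomial K)) (tpow (Polynomial K) (-1)) σ
        (Polynomial.derivative f)).coeff q = 0) ∧
    (evalxy ((HahnSeries.C : Polynomial K →+* HahnSeries ℚ (Polynomial K)).comp
        (Polynomial.C : K →+* Polynomial K)) (tpow (Polynomial K) (-1)) σ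
        (Polynomial.derivative f)).coeff (lam - δ) = Polynomial.derivative fσ := by
  have hDσ : HSDeriv.D σ = HahnSeries.single δ (1 : Polynomial K) := by
    rw [hσ]; exact HSDeriv.D_sigma δ s
  have key : HSDeriv.D
      (evalxy ((HahnSeries.C : Polynomial K →+* HahnSeries ℚ (Polynomial K)).comp
          (Polynomial.C : K →+* Polynomial K)) (tpow (Polynomial K) (-1)) σ f
        - (HahnSeries.C : Polynomial K →+* HahnSeries ℚ (Polynomial K)) (Polynomial.C ξ))
      = evalxy ((HahnSeries.C : Polynomial K →+* HahnSeries ℚ (Polynomial K)).comp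
          (Polynomial.C : K →+* Polynomial K)) (tpow (Polynomial K) (-1)) σ
          (Polynomial.derivative f) * HahnSeries.single δ (1 : Polynomial K) := by
    rw [HSDeriv.D_sub]
    unfold evalxy
    rw [HSDeriv.D_eval₂ _ HSDeriv.D_psi σ f, hDσ, HSDeriv.D_HC]
    simp
  have hco : ∀ q : ℚ,
      (evalxy ((HahnSeries.C : Polynomial K →+* HahnSeries ℚ (Polynomial K)).comp
          (Polynomial.C : K →+* Polynomial K)) (tpow (Polynomial K) (-1)) σ
          (Polynomial.derivative f)).coeff q
      = Polynomial.derivative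
          ((evalxy ((HahnSeries.C : Polynomial K →+* HahnSeries ℚ (Polynomial K)).comp
            (Polynomial.C : K →+* Polynomial K)) (tpow (Polynomial K) (-1)) σ f
          - (HahnSeries.C : Polynomial K →+* HahnSeries ℚ (Polynomial K))
              (Polynomial.C ξ)).coeff (q + δ)) := by
    intro q
    have h1 := HahnSeries.coeff_mul_single_add (Γ := ℚ) (r := (1 : Polynomial K))
      (x := evalxy ((HahnSeries.C : Polynomial K →+* HahnSeries ℚ (Polynomial K)).comp
          (Polynomial.C : K →+* Polynomial K)) (tpow (Polynomial K) (-1)) σ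
          (Polynomial.derivative f)) (a := q) (b := δ)
    rw [← key, HSDeriv.D_coeff, mul_one] at h1
    exact h1.symm
  constructor
  · intro q hq
    rw [hco q, hbelow (q + δ) (by linarith)]
    simp
  · rw [hco (lam - δ), sub_add_cancel, ← hfσ]


end
end

section
/- Let (f, g) be a Jacobian pair with deg_y f ≥ 1 and deg_y g ≥ 1. Then the resultant Res_y(f_y, g_y), taken with respect to y, is a nonzero constant polynomial in K[x]; in particular I(f_y, g_y) = 0. -/
open Polynomial

noncomputable section

/-- The Sylvester matrix of two polynomials `f, g` over a commutative ring. -/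
def sylvester {R : Type*} [CommRing R] (f g : Polynomial R) :
    Matrix (Fin (g.natDegree + f.natDegree)) (Fin (g.natDegree + f.natDegree)) R :=
  Matrix.of fun i (j : Fin (g.natDegree + f.natDegree)) =>
    Fin.addCases
      (fun j : Fin g.natDegree =>
        if (j : ℕ) ≤ (i : ℕ) ∧ (i : ℕ) ≤ (j : ℕ) + f.natDegree then f.coeff ((i : ℕ) - j) else 0)
      (fun j : Fin f.natDegree =>
        if (j : ℕ) ≤ (i : ℕ) ∧ (i : ℕ) ≤ (j : ℕ) + g.natDegree then g.coeff ((i : ℕ) - j) else 0)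
      j

/-- The resultant of two polynomials, as the determinant of their Sylvester matrix.
For `f, g ∈ K[x][y]` (outer variable `y`), this is `Res_y(f, g) ∈ K[x]`. -/
def resultant {R : Type*} [CommRing R] (f g : Polynomial R) : R :=
  (_root_.sylvester f g).det

/-- The partial derivative with respect to the inner variable `x` of `f ∈ K[x][y]`
(`y` being the outer variable). -/
def dx {K : Type*} [CommRing K] (f : Polynomial (Polynomial K)) : Polynomial (Polynomial K) :=
  f.sum fun n c => Polynomial.C (Polynomial.derivative c) * Polynomial.X ^ n

/-- A coordinate description of the Sylvester matrix entries. -/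
def sylEntry {R : Type*} [CommRing R] (f g : Polynomial R) (i j : ℕ) : R :=
  if j < g.natDegree then
    (if j ≤ i ∧ i ≤ j + f.natDegree then f.coeff (i - j) else 0)
  else
    (if j - g.natDegree ≤ i ∧ i ≤ (j - g.natDegree) + g.natDegree then
      g.coeff (i - (j - g.natDegree)) else 0)

lemma sylvester_apply {R : Type*} [CommRing R] (f g : Polynomial R)
    (i j : Fin (g.natDegree + f.natDegree)) :
    _root_.sylvester f g i j = sylEntry f g (i : ℕ) (j : ℕ) := by
  refine Fin.addCases (fun j => ?_) (fun j => ?_) j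
  · have hj : (Fin.castAdd f.natDegree j : ℕ) = (j : ℕ) := rfl
    simp [_root_.sylvester, sylEntry, hj, j.isLt]
  · have hj : (Fin.natAdd g.natDegree j : ℕ) = g.natDegree + (j : ℕ) := rfl
    simp [_root_.sylvester, sylEntry, hj]

lemma resultant_map {R S : Type*} [CommRing R] [CommRing S] (φ : R →+* S)
    (F G : Polynomial R) (hF : (F.map φ).natDegree = F.natDegree)
    (hG : (G.map φ).natDegree = G.natDegree) :
    φ (_root_.resultant F G) = _root_.resultant (F.map φ) (G.map φ) := by
  unfold _root_.resultant
  rw [RingHom.map_det]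
  have hsz : (G.map φ).natDegree + (F.map φ).natDegree = G.natDegree + F.natDegree := by
    rw [hF, hG]
  have hmat : (φ.mapMatrix (_root_.sylvester F G)) =
      Matrix.reindex (finCongr hsz) (finCongr hsz) (_root_.sylvester (F.map φ) (G.map φ)) := by
    ext i j
    have h1 : (((finCongr hsz).symm i : Fin _) : ℕ) = (i : ℕ) := by simp
    have h2 : (((finCongr hsz).symm j : Fin _) : ℕ) = (j : ℕ) := by simp
    simp only [RingHom.mapMatrix_apply, Matrix.map_apply, Matrix.reindex_apply,
      Matrix.submatrix_apply, sylvester_apply, h1, h2]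
    unfold sylEntry
    rw [hF, hG]
    split_ifs <;> simp [coeff_map]
  rw [hmat, Matrix.det_reindex_self]

/-- Key lemma: resultant of coprime nonzero polynomials over a field is nonzero. -/
lemma resultant_ne_zero {K : Type*} [Field K] {P Q : Polynomial K}
    (hP : P ≠ 0) (hQ : Q ≠ 0) (hcop : IsCoprime P Q) : _root_.resultant P Q ≠ 0 := by
  intro hdet
  set n := Q.natDegree with hn
  set m := P.natDegree with hm
  obtain ⟨v, hv, hMv⟩ := (Matrix.exists_mulVec_eq_zero_iff).2 hdet
  set A : Polynomial K := ∑ j : Fin n, C (v (Fin.castAdd m j)) * X ^ (j : ℕ) with hA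
  set B : Polynomial K := ∑ j : Fin m, C (v (Fin.natAdd n j)) * X ^ (j : ℕ) with hB
  -- coefficients of A and B
  have hcoeffA : ∀ k : ℕ, A.coeff k =
      ∑ j : Fin n, (if (j : ℕ) = k then v (Fin.castAdd m j) else 0) := by
    intro k
    rw [hA, finset_sum_coeff]
    refine Finset.sum_congr rfl fun j _ => ?_
    rw [coeff_C_mul, coeff_X_pow]
    by_cases h : (j : ℕ) = k
    · simp [h]
    · simp [h, Ne.symm h]
  have hcoeffB : ∀ k : ℕ, B.coeff k =
      ∑ j : Fin m, (if (j : ℕ) = k then v (Fin.natAdd n j) else 0) := by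
    intro k
    rw [hB, finset_sum_coeff]
    refine Finset.sum_congr rfl fun j _ => ?_
    rw [coeff_C_mul, coeff_X_pow]
    by_cases h : (j : ℕ) = k
    · simp [h]
    · simp [h, Ne.symm h]
  have hAc : ∀ j : Fin n, A.coeff (j : ℕ) = v (Fin.castAdd m j) := by
    intro j
    rw [hcoeffA]
    rw [Finset.sum_eq_single j (fun b _ hb => if_neg (by simpa [Fin.val_eq_val] using hb))
      (by simp)]
    simp
  have hBc : ∀ j : Fin m, B.coeff (j : ℕ) = v (Fin.natAdd n j) := by
    intro j
    rw [hcoeffB]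
    rw [Finset.sum_eq_single j (fun b _ hb => if_neg (by simpa [Fin.val_eq_val] using hb))
      (by simp)]
    simp
  have hdegA : A.degree < (n : WithBot ℕ) := by
    rw [← Nat.cast_id n] at *
    refine (degree_lt_iff_coeff_zero _ _).2 fun k hk => ?_
    rw [hcoeffA]
    refine Finset.sum_eq_zero fun j _ => if_neg ?_
    have := j.isLt
    omega
  have hdegB : B.degree < (m : WithBot ℕ) := by
    refine (degree_lt_iff_coeff_zero _ _).2 fun k hk => ?_
    rw [hcoeffB]
    refine Finset.sum_eq_zero fun j _ => if_neg ?_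
    have := j.isLt
    omega
  -- coefficients of A * P and B * Q
  have htermP : ∀ (a : K) (j k : ℕ), (C a * X ^ j * P).coeff k =
      a * (if j ≤ k ∧ k ≤ j + m then P.coeff (k - j) else 0) := by
    intro a j k
    rw [mul_right_comm, coeff_mul_X_pow', coeff_C_mul]
    by_cases hj : j ≤ k
    · by_cases hk : k ≤ j + m
      · simp [hj, hk]
      · have hlt : P.natDegree < k - j := by omega
        simp [hj, hk, coeff_eq_zero_of_natDegree_lt hlt]
    · simp [hj]
  have htermQ : ∀ (a : K) (j k : ℕ), (C a * X ^ j * Q).coeff k =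
      a * (if j ≤ k ∧ k ≤ j + n then Q.coeff (k - j) else 0) := by
    intro a j k
    rw [mul_right_comm, coeff_mul_X_pow', coeff_C_mul]
    by_cases hj : j ≤ k
    · by_cases hk : k ≤ j + n
      · simp [hj, hk]
      · have hlt : Q.natDegree < k - j := by omega
        simp [hj, hk, coeff_eq_zero_of_natDegree_lt hlt]
    · simp [hj]
  have key : A * P + B * Q = 0 := by
    ext k
    rw [coeff_add, coeff_zero, hA, hB, Finset.sum_mul, Finset.sum_mul,
      finset_sum_coeff, finset_sum_coeff]
    simp only [htermP, htermQ]
    by_cases hk : k < n + m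
    · have h0 : Matrix.mulVec (_root_.sylvester P Q) v ⟨k, hk⟩ = 0 := by rw [hMv]; rfl
      rw [Matrix.mulVec, dotProduct] at h0
      rw [Fin.sum_univ_add] at h0
      simp only [sylvester_apply] at h0
      have hL : ∀ j : Fin n, sylEntry P Q k ((Fin.castAdd m j : Fin (n + m)) : ℕ) =
          (if (j : ℕ) ≤ k ∧ k ≤ (j : ℕ) + m then P.coeff (k - (j : ℕ)) else 0) := by
        intro j
        have hj : ((Fin.castAdd m j : Fin (n + m)) : ℕ) = (j : ℕ) := rfl
        rw [hj]
        unfold sylEntry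
        rw [if_pos j.isLt]
      have hR : ∀ j : Fin m, sylEntry P Q k ((Fin.natAdd n j : Fin (n + m)) : ℕ) =
          (if (j : ℕ) ≤ k ∧ k ≤ (j : ℕ) + n then Q.coeff (k - (j : ℕ)) else 0) := by
        intro j
        have hj : ((Fin.natAdd n j : Fin (n + m)) : ℕ) = n + (j : ℕ) := rfl
        rw [hj]
        unfold sylEntry
        rw [if_neg (by omega)]
        simp only [hn, Nat.add_sub_cancel_left]
      change (∑ x : Fin n, sylEntry P Q k ((Fin.castAdd m x : Fin (n + m)) : ℕ) * v (Fin.castAdd m x)) +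
        ∑ x : Fin m, sylEntry P Q k ((Fin.natAdd n x : Fin (n + m)) : ℕ) * v (Fin.natAdd n x) = 0 at h0
      simp only [hL, hR] at h0
      refine Eq.trans ?_ h0
      congr 1 <;> exact Finset.sum_congr rfl fun j _ => mul_comm _ _
    · have z1 : (∑ x : Fin n, v (Fin.castAdd m x) *
          if (x : ℕ) ≤ k ∧ k ≤ (x : ℕ) + m then P.coeff (k - (x : ℕ)) else 0) = 0 :=
        Finset.sum_eq_zero fun j _ => by rw [if_neg (by have := j.isLt; omega), mul_zero]
      have z2 : (∑ x : Fin m, v (Fin.natAdd n x) *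
          if (x : ℕ) ≤ k ∧ k ≤ (x : ℕ) + n then Q.coeff (k - (x : ℕ)) else 0) = 0 :=
        Finset.sum_eq_zero fun j _ => by rw [if_neg (by have := j.isLt; omega), mul_zero]
      rw [z1, z2, add_zero]
  -- derive contradiction
  have hv' : A ≠ 0 ∧ B ≠ 0 := by
    constructor
    · intro h0A
      have hBQ : B * Q = 0 := by rw [← key, h0A, zero_mul, zero_add]
      have h0B : B = 0 := by
        rcases mul_eq_zero.1 hBQ with h | h
        · exact h
        · exact absurd h hQ
      apply hv
      funext i
      show v i = 0
      refine Fin.addCases (fun j => ?_) (fun j => ?_) i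
      · rw [← hAc j, h0A, coeff_zero]
      · rw [← hBc j, h0B, coeff_zero]
    · intro h0B
      have hAP : A * P = 0 := by
        have hk := key
        rw [h0B, zero_mul, add_zero] at hk
        exact hk
      have h0A : A = 0 := by
        rcases mul_eq_zero.1 hAP with h | h
        · exact h
        · exact absurd h hP
      apply hv
      funext i
      show v i = 0
      refine Fin.addCases (fun j => ?_) (fun j => ?_) i
      · rw [← hAc j, h0A, coeff_zero]
      · rw [← hBc j, h0B, coeff_zero]
  obtain ⟨hA0, hB0⟩ := hv'
  have hdvd : Q ∣ A * P := ⟨-B, by linear_combination key⟩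
  have hQA : Q ∣ A := (hcop.symm).dvd_of_dvd_mul_right hdvd
  have hle : Q.degree ≤ A.degree := degree_le_of_dvd hQA hA0
  have hQdeg : Q.degree = (n : WithBot ℕ) := degree_eq_natDegree hQ
  rw [hQdeg] at hle
  exact absurd (lt_of_le_of_lt hle hdegA) (lt_irrefl _)

/-- For a Jacobian pair `(f, g)`, the resultant `Res_y(f_y, g_y)` is a nonzero constant of
`K[x]`; in particular `I(f_y, g_y) = deg_x Res_y(f_y, g_y) = 0`. -/
theorem resultant_fy_gy_const {K : Type*} [Field K] [IsAlgClosed K] [CharZero K]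
    (f g : Polynomial (Polynomial K)) (hf : f.Monic) (hg : g.Monic)
    (hfdeg : 1 ≤ f.natDegree) (hgdeg : 1 ≤ g.natDegree)
    (hJac : ∃ c : K, c ≠ 0 ∧
      dx f * derivative g - derivative f * dx g = Polynomial.C (Polynomial.C c)) :
    (∃ c : K, c ≠ 0 ∧ _root_.resultant (derivative f) (derivative g) = Polynomial.C c) ∧
      (_root_.resultant (derivative f) (derivative g)).natDegree = 0 := by
  obtain ⟨c, hc, hce⟩ := hJac
  set P : Polynomial (Polynomial K) := derivative f with hPdef
  set Q : Polynomial (Polynomial K) := derivative g with hQdef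
  -- leading coefficient facts
  have hfpos : 0 < f.natDegree := hfdeg
  have hgpos : 0 < g.natDegree := hgdeg
  have hPdeg : P.natDegree = f.natDegree - 1 :=
    natDegree_eq_of_degree_eq_some (degree_derivative_eq f hfpos)
  have hQdeg : Q.natDegree = g.natDegree - 1 :=
    natDegree_eq_of_degree_eq_some (degree_derivative_eq g hgpos)
  have hPlead : P.leadingCoeff = (f.natDegree : Polynomial K) := by
    rw [leadingCoeff, hPdeg, hPdef, coeff_derivative]
    have h1 : f.natDegree - 1 + 1 = f.natDegree := by omega
    rw [h1, hf.coeff_natDegree, one_mul]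
    exact_mod_cast congrArg (Nat.cast : ℕ → Polynomial K) h1
  have hQlead : Q.leadingCoeff = (g.natDegree : Polynomial K) := by
    rw [leadingCoeff, hQdeg, hQdef, coeff_derivative]
    have h1 : g.natDegree - 1 + 1 = g.natDegree := by omega
    rw [h1, hg.coeff_natDegree, one_mul]
    exact_mod_cast congrArg (Nat.cast : ℕ → Polynomial K) h1
  -- evaluation at each point of K is nonzero
  have hevalne : ∀ a : K, (_root_.resultant P Q).eval a ≠ 0 := by
    intro a
    set φ : Polynomial K →+* K := evalRingHom a with hφ
    have hφP : φ P.leadingCoeff ≠ 0 := by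
      rw [hPlead, map_natCast]
      exact Nat.cast_ne_zero.2 (by omega)
    have hφQ : φ Q.leadingCoeff ≠ 0 := by
      rw [hQlead, map_natCast]
      exact Nat.cast_ne_zero.2 (by omega)
    have hFdeg : (P.map φ).natDegree = P.natDegree :=
      natDegree_map_of_leadingCoeff_ne_zero φ hφP
    have hGdeg : (Q.map φ).natDegree = Q.natDegree :=
      natDegree_map_of_leadingCoeff_ne_zero φ hφQ
    have hP' : P.map φ ≠ 0 := fun h => by
      apply hφP
      rw [← coeff_natDegree, ← coeff_map, h, coeff_zero]
    have hQ' : Q.map φ ≠ 0 := fun h => by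
      apply hφQ
      rw [← coeff_natDegree, ← coeff_map, h, coeff_zero]
    -- coprimality of the specializations
    have hcop : IsCoprime (P.map φ) (Q.map φ) := by
      classical
      by_contra hnc
      have hgcd := EuclideanDomain.gcd_isUnit_iff (α := Polynomial K)
        (x := P.map φ) (y := Q.map φ)
      have hdne : EuclideanDomain.gcd (P.map φ) (Q.map φ) ≠ 0 := by
        intro h0
        exact hP' ((EuclideanDomain.gcd_eq_zero_iff).1 h0).1
      have hnu : ¬ IsUnit (EuclideanDomain.gcd (P.map φ) (Q.map φ)) := fun h =>
        hnc (hgcd.1 h)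
      have hdeg0 : (EuclideanDomain.gcd (P.map φ) (Q.map φ)).degree ≠ 0 := fun h =>
        hnu (isUnit_iff_degree_eq_zero.2 h)
      obtain ⟨b, hb⟩ := IsAlgClosed.exists_root _ hdeg0
      have hbP : (P.map φ).eval b = 0 :=
        hb.dvd (EuclideanDomain.gcd_dvd_left _ _)
      have hbQ : (Q.map φ).eval b = 0 :=
        hb.dvd (EuclideanDomain.gcd_dvd_right _ _)
      -- evaluate the Jacobian identity at (a, b)
      set ψ : Polynomial (Polynomial K) →+* K :=
        (evalRingHom b).comp (mapRingHom (evalRingHom a)) with hψ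
      have hψP : ψ P = 0 := hbP
      have hψQ : ψ Q = 0 := hbQ
      have := congrArg ψ hce
      rw [map_sub, map_mul, map_mul, hψP, hψQ, mul_zero, zero_mul, sub_zero] at this
      simp only [hψ, RingHom.comp_apply, coe_mapRingHom, map_C, coe_evalRingHom, eval_C] at this
      exact hc this.symm
    have := @resultant_ne_zero K _ (P.map φ) (Q.map φ) hP' hQ' hcop
    rw [← resultant_map φ P Q hFdeg hGdeg] at this
    simpa [hφ] using this
  -- conclude
  set r : Polynomial K := _root_.resultant P Q with hr
  have hr0 : r ≠ 0 := fun h => hevalne 0 (by rw [← hr] at *; rw [h, eval_zero])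
  have hdeg0 : r.natDegree = 0 := by
    by_contra hnd
    have hdne : r.degree ≠ 0 := by
      rw [degree_eq_natDegree hr0]
      exact_mod_cast hnd
    obtain ⟨b, hb⟩ := IsAlgClosed.exists_root _ hdne
    exact hevalne b hb
  refine ⟨⟨r.coeff 0, ?_, (eq_C_of_natDegree_eq_zero hdeg0)⟩, hdeg0⟩
  intro h0
  apply hevalne 0
  rw [eq_C_of_natDegree_eq_zero hdeg0, h0, map_zero, eval_zero]
end
end

section
/- Let (f, g) be a Jacobian pair. Then K(f,g) = K(x,y) if and only if K[f,g] = K[x,y]; that is, f and g generate the rational function field K(x,y) over K if and only if they generate the polynomial ring K[x,y] over K. -/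
open Polynomial

noncomputable section

/-- The subfield `K(f,g)` of the rational function field `K(x,y)` generated over `K`
by `f` and `g`. -/
def subfieldGen {K : Type*} [Field K] (f g : Polynomial (Polynomial K)) :
    Subfield (FractionRing (Polynomial (Polynomial K))) :=
  Subfield.closure
    (Set.range (fun c : K =>
        algebraMap (Polynomial (Polynomial K)) (FractionRing (Polynomial (Polynomial K)))
          (Polynomial.C (Polynomial.C c))) ∪
      {algebraMap (Polynomial (Polynomial K)) (FractionRing (Polynomial (Polynomial K))) f,
       algebraMap (Polynomial (Polynomial K)) (FractionRing (Polynomial (Polynomial K))) g})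

namespace JacProof

variable {K : Type*} [Field K]


theorem dx_monomial (n : ℕ) (a : Polynomial K) :
    dx (monomial n a : Polynomial (Polynomial K)) = monomial n (derivative a) := by
  unfold dx
  rw [sum_monomial_index]
  · rw [C_mul_X_pow_eq_monomial]
  · simp

theorem dx_add (p q : Polynomial (Polynomial K)) : dx (p + q) = dx p + dx q := by
  unfold dx
  rw [sum_add_index] <;> simp [add_mul]

theorem dx_smul (k : K) (p : Polynomial (Polynomial K)) : dx (k • p) = k • dx p := by
  induction p using Polynomial.induction_on' with
  | add u v hu hv => rw [smul_add, dx_add, hu, hv, dx_add, smul_add]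
  | monomial n a => rw [smul_monomial, dx_monomial, dx_monomial, smul_monomial,
      derivative_smul]

theorem dx_mul (p q : Polynomial (Polynomial K)) : dx (p * q) = dx p * q + p * dx q := by
  induction p using Polynomial.induction_on' with
  | add u v hu hv => rw [add_mul, dx_add, hu, hv, dx_add, add_mul, add_mul]; ring
  | monomial n a =>
    induction q using Polynomial.induction_on' with
    | add u v hu hv => rw [mul_add, dx_add, hu, hv, dx_add, mul_add, mul_add]; ring
    | monomial m b =>
      rw [monomial_mul_monomial, dx_monomial, dx_monomial, dx_monomial, derivative_mul,
        monomial_mul_monomial, monomial_mul_monomial, map_add]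

theorem dx_C (a : Polynomial K) : dx (C a : Polynomial (Polynomial K)) = C (derivative a) := by
  rw [← monomial_zero_left, dx_monomial, monomial_zero_left]

theorem dx_X : dx (X : Polynomial (Polynomial K)) = 0 := by
  rw [← monomial_one_one_eq_X, dx_monomial]
  simp

/-- `dx` bundled as a derivation. -/
def Dx : Derivation K (Polynomial (Polynomial K)) (Polynomial (Polynomial K)) where
  toFun := dx
  map_add' := dx_add
  map_smul' := dx_smul
  map_one_eq_zero' := by
    have := dx_mul (1 : Polynomial (Polynomial K)) 1
    simp only [mul_one, one_mul] at this
    show dx (1 : Polynomial (Polynomial K)) = 0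
    exact left_eq_add.mp this
  leibniz' a b := by
    show dx (a * b) = a * dx b + b * dx a
    rw [dx_mul]; ring

/-- `derivative` bundled as a `K`-derivation. -/
def Dy : Derivation K (Polynomial (Polynomial K)) (Polynomial (Polynomial K)) where
  toFun := derivative
  map_add' := fun p q => derivative_add
  map_smul' := derivative_smul
  map_one_eq_zero' := derivative_one
  leibniz' a b := by
    show derivative (a * b) = a * derivative b + b * derivative a
    rw [derivative_mul]; ring

/-- A combination derivation. -/
def Dmix (w1 w2 : Polynomial (Polynomial K)) : Derivation K (Polynomial (Polynomial K)) (Polynomial (Polynomial K)) := w1 • Dx + w2 • Dy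

theorem Dmix_apply (w1 w2 p : Polynomial (Polynomial K)) : Dmix w1 w2 p = w1 * dx p + w2 * derivative p := rfl

variable (f g : Polynomial (Polynomial K))

/-- The evaluation homomorphism `K[F][G] → K[x][y]`, `F ↦ f`, `G ↦ g`. -/
def phi : Polynomial (Polynomial K) →+* Polynomial (Polynomial K) := eval₂RingHom ((aeval f : Polynomial K →ₐ[K] Polynomial (Polynomial K)) : Polynomial K →+* Polynomial (Polynomial K)) g

theorem phi_X : phi f g X = g := eval₂_X _ _

theorem phi_C (q : Polynomial K) : phi f g (C q) = aeval f q := eval₂_C _ _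

theorem phi_CX : phi f g (C X) = f := by rw [phi_C, aeval_X]

theorem phi_const (k : K) : phi f g (C (C k)) = algebraMap K (Polynomial (Polynomial K)) k := by
  rw [phi_C, aeval_C]

/-- Chain rule for a derivation applied to `phi`. -/
theorem chain (d : Derivation K (Polynomial (Polynomial K)) (Polynomial (Polynomial K))) (P : Polynomial (Polynomial K)) :
    d (phi f g P) = phi f g (dx P) * d f + phi f g (derivative P) * d g := by
  induction P using Polynomial.induction_on' with
  | add u v hu hv =>
    rw [map_add, map_add, dx_add, derivative_add, map_add, map_add, hu, hv]; ring
  | monomial n a =>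
    have hm : ∀ (m : ℕ) (b : Polynomial K), phi f g (monomial m b) = aeval f b * g ^ m := by
      intro m b
      rw [← C_mul_X_pow_eq_monomial, map_mul, phi_C, map_pow, phi_X]
    rw [hm, dx_monomial, hm, derivative_monomial, ← C_mul_X_pow_eq_monomial,
      C_mul_X_pow_eq_monomial, hm, d.leibniz, d.leibniz_pow, Derivation.comp_aeval_eq,
      map_mul, map_natCast]
    simp only [smul_eq_mul, nsmul_eq_mul]
    ring

/-- first dual derivation -/
def D1 (c : K) (g : Polynomial (Polynomial K)) : Derivation K (Polynomial (Polynomial K)) (Polynomial (Polynomial K)) :=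
  Dmix (C (C c⁻¹) * derivative g) (-(C (C c⁻¹) * dx g))

/-- second dual derivation -/
def D2 (c : K) (f : Polynomial (Polynomial K)) : Derivation K (Polynomial (Polynomial K)) (Polynomial (Polynomial K)) :=
  Dmix (-(C (C c⁻¹) * derivative f)) (C (C c⁻¹) * dx f)

section Jac

variable {f g : Polynomial (Polynomial K)} {c : K}

theorem D1_f (hc : c ≠ 0)
    (hJac : dx f * derivative g - derivative f * dx g = C (C c)) : D1 c g f = 1 := by
  rw [D1, Dmix_apply]
  have : C (C c⁻¹) * derivative g * dx f + -(C (C c⁻¹) * dx g) * derivative f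
      = C (C c⁻¹) * (dx f * derivative g - derivative f * dx g) := by ring
  rw [this, hJac, ← C_mul, ← C_mul, inv_mul_cancel₀ hc, C_1, C_1]

theorem D1_g : D1 c g g = 0 := by
  rw [D1, Dmix_apply]; ring

theorem D2_f : D2 c f f = 0 := by
  rw [D2, Dmix_apply]; ring

theorem D2_g (hc : c ≠ 0)
    (hJac : dx f * derivative g - derivative f * dx g = C (C c)) : D2 c f g = 1 := by
  rw [D2, Dmix_apply]
  have : -(C (C c⁻¹) * derivative f) * dx g + C (C c⁻¹) * dx f * derivative g
      = C (C c⁻¹) * (dx f * derivative g - derivative f * dx g) := by ring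
  rw [this, hJac, ← C_mul, ← C_mul, inv_mul_cancel₀ hc, C_1, C_1]

theorem algMap_eq (k : K) : algebraMap K (Polynomial (Polynomial K)) k = C (C k) := by
  rw [IsScalarTower.algebraMap_apply K (Polynomial K) (Polynomial (Polynomial K)),
    Polynomial.algebraMap_eq, Polynomial.algebraMap_eq]

theorem aeval_f_inj [CharZero K] (hc : c ≠ 0)
    (hJac : dx f * derivative g - derivative f * dx g = C (C c)) :
    ∀ q : Polynomial K, aeval f q = 0 → q = 0 := by
  suffices H : ∀ (n : ℕ) (q : Polynomial K), q.natDegree ≤ n → aeval f q = 0 → q = 0 by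
    exact fun q => H q.natDegree q le_rfl
  intro n
  induction n with
  | zero =>
    intro q hdeg h0
    obtain ⟨k, rfl⟩ := Polynomial.natDegree_eq_zero.mp (Nat.le_zero.mp hdeg)
    rw [aeval_C, algMap_eq] at h0
    have : C (C k) = C (C (0 : K)) := by simpa using h0
    simpa using C_inj.mp (C_inj.mp this)
  | succ n ih =>
    intro q hdeg h0
    have hd : aeval f (derivative q) = 0 := by
      have := Derivation.comp_aeval_eq (a := f) (D1 c g) q
      rw [h0, map_zero, D1_f hc hJac, smul_eq_mul, mul_one] at this
      exact this.symm
    have hdq : derivative q = 0 := by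
      rcases eq_or_ne q 0 with rfl | hq
      · simp
      rcases Nat.eq_zero_or_pos q.natDegree with h | h
      · rw [Polynomial.eq_C_of_natDegree_eq_zero h]; simp
      · refine ih (derivative q) ?_ hd
        have h2 := Polynomial.natDegree_derivative_lt (p := q) (Nat.pos_iff_ne_zero.mp h)
        omega
    obtain ⟨k, rfl⟩ := Polynomial.natDegree_eq_zero.mp
      (Polynomial.natDegree_eq_zero_of_derivative_eq_zero hdq)
    rw [aeval_C, algMap_eq] at h0
    have : C (C k) = C (C (0 : K)) := by simpa using h0
    simpa using C_inj.mp (C_inj.mp this)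

theorem phi_inj [CharZero K] (hc : c ≠ 0)
    (hJac : dx f * derivative g - derivative f * dx g = C (C c)) :
    ∀ P : Polynomial (Polynomial K), phi f g P = 0 → P = 0 := by
  suffices H : ∀ (n : ℕ) (P : Polynomial (Polynomial K)), P.natDegree ≤ n →
      phi f g P = 0 → P = 0 by
    exact fun P => H P.natDegree P le_rfl
  intro n
  induction n with
  | zero =>
    intro P hdeg h0
    obtain ⟨q, rfl⟩ := Polynomial.natDegree_eq_zero.mp (Nat.le_zero.mp hdeg)
    rw [phi_C] at h0
    rw [aeval_f_inj hc hJac q h0, map_zero]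
  | succ n ih =>
    intro P hdeg h0
    have hd : phi f g (derivative P) = 0 := by
      have := chain f g (D2 c f) P
      rw [h0, map_zero, D2_f, D2_g hc hJac, mul_zero, mul_one, zero_add] at this
      exact this.symm
    have hdP : derivative P = 0 := by
      rcases eq_or_ne P 0 with rfl | hP
      · simp
      rcases Nat.eq_zero_or_pos P.natDegree with h | h
      · rw [Polynomial.eq_C_of_natDegree_eq_zero h]; simp
      · refine ih (derivative P) ?_ hd
        have h2 := Polynomial.natDegree_derivative_lt (p := P) (Nat.pos_iff_ne_zero.mp h)
        omega
    obtain ⟨q, rfl⟩ := Polynomial.natDegree_eq_zero.mp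
      (Polynomial.natDegree_eq_zero_of_derivative_eq_zero hdP)
    rw [phi_C] at h0
    rw [aeval_f_inj hc hJac q h0, map_zero]

theorem phi_injective [CharZero K] (hc : c ≠ 0)
    (hJac : dx f * derivative g - derivative f * dx g = C (C c)) :
    Function.Injective (phi f g) := by
  intro P Q h
  have : phi f g (P - Q) = 0 := by rw [map_sub, h, sub_self]
  exact sub_eq_zero.mp (phi_inj hc hJac _ this)

/-- The core contradiction: no prime of `K[x][y]` can divide both `f - a` and `g - b`. -/
theorem core (hc : c ≠ 0)
    (hJac : dx f * derivative g - derivative f * dx g = C (C c))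
    (p : Polynomial (Polynomial K)) (hp : Prime p) (a b : K)
    (ha : p ∣ f - algebraMap K (Polynomial (Polynomial K)) a)
    (hb : p ∣ g - algebraMap K (Polynomial (Polynomial K)) b) : False := by
  obtain ⟨u, hu⟩ := ha
  obtain ⟨v, hv⟩ := hb
  have e1 : (1 : Polynomial (Polynomial K)) = p * D1 c g u + u * D1 c g p := by
    have h1 : D1 c g (f - algebraMap K (Polynomial (Polynomial K)) a) = 1 := by
      rw [map_sub, D1_f hc hJac, Derivation.map_algebraMap, sub_zero]
    rw [hu, Derivation.leibniz, smul_eq_mul, smul_eq_mul] at h1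
    exact h1.symm
  have e2 : (0 : Polynomial (Polynomial K)) = p * D1 c g v + v * D1 c g p := by
    have h1 : D1 c g (g - algebraMap K (Polynomial (Polynomial K)) b) = 0 := by
      rw [map_sub, D1_g, Derivation.map_algebraMap, sub_zero]
    rw [hv, Derivation.leibniz, smul_eq_mul, smul_eq_mul] at h1
    exact h1.symm
  have e4 : (1 : Polynomial (Polynomial K)) = p * D2 c f v + v * D2 c f p := by
    have h1 : D2 c f (g - algebraMap K (Polynomial (Polynomial K)) b) = 1 := by
      rw [map_sub, D2_g hc hJac, Derivation.map_algebraMap, sub_zero]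
    rw [hv, Derivation.leibniz, smul_eq_mul, smul_eq_mul] at h1
    exact h1.symm
  have hdvd : p ∣ v * D1 c g p := ⟨-(D1 c g v), by linear_combination -e2⟩
  have h1dvd : ¬ p ∣ (1 : Polynomial (Polynomial K)) := fun h =>
    hp.not_unit (isUnit_of_dvd_one h)
  rcases hp.dvd_or_dvd hdvd with h | h
  · -- p ∣ v
    apply h1dvd
    obtain ⟨w, hw⟩ := h
    exact ⟨D2 c f v + w * D2 c f p, by rw [e4, hw]; ring⟩
  · -- p ∣ D1 p
    apply h1dvd
    obtain ⟨w, hw⟩ := h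
    exact ⟨D1 c g u + u * w, by rw [e1, hw]; ring⟩

end Jac

/-- From a nonzero element of a prime ideal (pushed through `ψ`), extract a root. -/
theorem root_mem [IsAlgClosed K] {W : Type*} [CommRing W] (ψ : Polynomial K →+* W)
    (I : Ideal W) (hI : I.IsPrime) :
    ∀ s : Polynomial K, s ≠ 0 → ψ s ∈ I → ∃ a : K, ψ (X - C a) ∈ I := by
  suffices H : ∀ (n : ℕ) (s : Polynomial K), s.natDegree ≤ n → s ≠ 0 → ψ s ∈ I →
      ∃ a : K, ψ (X - C a) ∈ I by
    exact fun s => H s.natDegree s le_rfl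
  intro n
  induction n with
  | zero =>
    intro s hdeg hs0 hsI
    obtain ⟨k, rfl⟩ := Polynomial.natDegree_eq_zero.mp (Nat.le_zero.mp hdeg)
    have hk : k ≠ 0 := fun h => hs0 (by rw [h, map_zero])
    have : IsUnit (ψ (C k)) := (isUnit_C.mpr (isUnit_iff_ne_zero.mpr hk)).map ψ
    exact absurd (I.eq_top_of_isUnit_mem hsI this) hI.ne_top
  | succ n ih =>
    intro s hdeg hs0 hsI
    rcases Nat.eq_zero_or_pos s.natDegree with h0 | hpos
    · obtain ⟨k, rfl⟩ := Polynomial.natDegree_eq_zero.mp h0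
      have hk : k ≠ 0 := fun h => hs0 (by rw [h, map_zero])
      have : IsUnit (ψ (C k)) := (isUnit_C.mpr (isUnit_iff_ne_zero.mpr hk)).map ψ
      exact absurd (I.eq_top_of_isUnit_mem hsI this) hI.ne_top
    · have hdne : s.degree ≠ 0 := by
        rw [Polynomial.degree_eq_natDegree hs0]
        exact_mod_cast Nat.pos_iff_ne_zero.mp hpos
      obtain ⟨a, ha⟩ := IsAlgClosed.exists_root s hdne
      obtain ⟨t, ht⟩ := dvd_iff_isRoot.mpr ha
      have ht0 : t ≠ 0 := fun h => hs0 (by rw [ht, h, mul_zero])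
      have hmem : ψ (X - C a) * ψ t ∈ I := by rw [← map_mul, ← ht]; exact hsI
      rcases hI.mem_or_mem hmem with h | h
      · exact ⟨a, h⟩
      · refine ih t ?_ ht0 h
        have : s.natDegree = 1 + t.natDegree := by
          rw [ht, Polynomial.natDegree_mul (Polynomial.X_sub_C_ne_zero a) ht0,
            Polynomial.natDegree_X_sub_C]
        omega

section Bezout

/-- Clearing denominators: relatively prime polynomials in `K[F][G]` admit a combination
equal to a nonzero polynomial in `F` alone. -/
theorem exists_C_combination (P Q : Polynomial (Polynomial K)) (hP : P ≠ 0) (hQ : Q ≠ 0)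
    (hrp : IsRelPrime P Q) :
    ∃ (U V : Polynomial (Polynomial K)) (s : Polynomial K), s ≠ 0 ∧ U * P + V * Q = C s := by
  classical
  let Kf := FractionRing (Polynomial K)
  let θ : Polynomial K →+* Kf := algebraMap (Polynomial K) Kf
  have θinj : Function.Injective θ := IsFractionRing.injective _ _
  have mapinj : Function.Injective (Polynomial.map θ) := Polynomial.map_injective θ θinj
  have θne : ∀ m : Polynomial K, m ≠ 0 → θ m ≠ 0 := fun m hm h =>
    hm (θinj (by rw [h, map_zero]))
  set P' := P.map θ with hP'def
  set Q' := Q.map θ with hQ'def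
  have hP' : P' ≠ 0 := (Polynomial.map_ne_zero_iff θinj).mpr hP
  have hQ' : Q' ≠ 0 := (Polynomial.map_ne_zero_iff θinj).mpr hQ
  set d := EuclideanDomain.gcd P' Q' with hddef
  have hd : IsUnit d := by
    by_contra hdu
    have hd0 : d ≠ 0 := fun h => hP' ((EuclideanDomain.gcd_eq_zero_iff.mp h).1)
    obtain ⟨⟨m, hm0⟩, hm⟩ :=
      IsLocalization.integerNormalization_map_to_map (nonZeroDivisors (Polynomial K)) d
    set N := IsLocalization.integerNormalization (nonZeroDivisors (Polynomial K)) d with hN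
    have hmne : m ≠ 0 := nonZeroDivisors.ne_zero hm0
    have hm' : N.map θ = C (θ m) * d := by
      rw [hm, Algebra.smul_def, Polynomial.algebraMap_apply]
    have hN0 : N ≠ 0 := by
      intro h
      apply mul_ne_zero (C_ne_zero.mpr (θne m hmne)) hd0
      rw [← hm', h, Polynomial.map_zero]
    -- the primitive part of N
    have hNP : N = C N.content * N.primPart := N.eq_C_content_mul_primPart
    have hcont : N.content ≠ 0 := fun h => hN0 (by
      rw [hNP, h, C_0, zero_mul])
    -- (map of) primPart N divides d
    have hdvd_d : (N.primPart.map θ) ∣ d := by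
      have h1 : N.primPart.map θ ∣ N.map θ := Polynomial.map_dvd _ N.primPart_dvd
      rw [hm'] at h1
      exact (IsUnit.dvd_mul_left (isUnit_C.mpr (isUnit_iff_ne_zero.mpr (θne m hmne)))).mp h1
    -- primPart N divides P and Q
    have hdivP : N.primPart ∣ P := by
      have h2 : N.primPart.map θ ∣ P.primPart.map θ := by
        refine dvd_trans hdvd_d ?_
        have h3 : d ∣ P' := EuclideanDomain.gcd_dvd_left P' Q'
        have h4 : P' = C (θ P.content) * (P.primPart.map θ) := by
          conv_lhs => rw [hP'def, P.eq_C_content_mul_primPart]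
          rw [Polynomial.map_mul, Polynomial.map_C]
        rw [h4] at h3
        exact (IsUnit.dvd_mul_left (isUnit_C.mpr (isUnit_iff_ne_zero.mpr
          (θne P.content (fun h => hP (by
            rw [P.eq_C_content_mul_primPart, h, C_0, zero_mul])))))).mp h3
      exact dvd_trans
        ((N.isPrimitive_primPart.dvd_iff_fraction_map_dvd_fraction_map Kf
          (q := P.primPart)).mpr h2) P.primPart_dvd
    have hdivQ : N.primPart ∣ Q := by
      have h2 : N.primPart.map θ ∣ Q.primPart.map θ := by
        refine dvd_trans hdvd_d ?_
        have h3 : d ∣ Q' := EuclideanDomain.gcd_dvd_right P' Q'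
        have h4 : Q' = C (θ Q.content) * (Q.primPart.map θ) := by
          conv_lhs => rw [hQ'def, Q.eq_C_content_mul_primPart]
          rw [Polynomial.map_mul, Polynomial.map_C]
        rw [h4] at h3
        exact (IsUnit.dvd_mul_left (isUnit_C.mpr (isUnit_iff_ne_zero.mpr
          (θne Q.content (fun h => hQ (by
            rw [Q.eq_C_content_mul_primPart, h, C_0, zero_mul])))))).mp h3
      exact dvd_trans
        ((N.isPrimitive_primPart.dvd_iff_fraction_map_dvd_fraction_map Kf
          (q := Q.primPart)).mpr h2) Q.primPart_dvd
    -- so primPart N is a unit, hence d is a unit: contradiction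
    have hunit : IsUnit N.primPart := hrp hdivP hdivQ
    apply hdu
    have : IsUnit (N.map θ) := by
      rw [hNP, Polynomial.map_mul, Polynomial.map_C]
      exact (isUnit_C.mpr (isUnit_iff_ne_zero.mpr (θne _ hcont))).mul
        (by simpa using hunit.map (mapRingHom θ))
    rw [hm'] at this
    exact isUnit_of_mul_isUnit_right this
  -- Bezout identity
  obtain ⟨e, he, hde⟩ := Polynomial.isUnit_iff.mp hd
  have he0 : e ≠ 0 := he.ne_zero
  have hbez : C e = P' * EuclideanDomain.gcdA P' Q' + Q' * EuclideanDomain.gcdB P' Q' := by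
    rw [hde]; exact EuclideanDomain.gcd_eq_gcd_ab P' Q'
  obtain ⟨⟨m₁, hm₁0⟩, hm₁⟩ :=
    IsLocalization.integerNormalization_map_to_map (nonZeroDivisors (Polynomial K))
      (EuclideanDomain.gcdA P' Q')
  obtain ⟨⟨m₂, hm₂0⟩, hm₂⟩ :=
    IsLocalization.integerNormalization_map_to_map (nonZeroDivisors (Polynomial K))
      (EuclideanDomain.gcdB P' Q')
  set A := IsLocalization.integerNormalization (nonZeroDivisors (Polynomial K))
    (EuclideanDomain.gcdA P' Q') with hA
  set Bb := IsLocalization.integerNormalization (nonZeroDivisors (Polynomial K))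
    (EuclideanDomain.gcdB P' Q') with hB
  have hm₁ne : m₁ ≠ 0 := nonZeroDivisors.ne_zero hm₁0
  have hm₂ne : m₂ ≠ 0 := nonZeroDivisors.ne_zero hm₂0
  have hm₁' : A.map θ = C (θ m₁) * EuclideanDomain.gcdA P' Q' := by
    rw [hm₁, Algebra.smul_def, Polynomial.algebraMap_apply]
  have hm₂' : Bb.map θ = C (θ m₂) * EuclideanDomain.gcdB P' Q' := by
    rw [hm₂, Algebra.smul_def, Polynomial.algebraMap_apply]
  -- write e = θ s₁ / θ s₂
  obtain ⟨s₁, s₂, hs₂0, hs⟩ := IsFractionRing.div_surjective (A := Polynomial K) e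
  have hs₂ne : s₂ ≠ 0 := nonZeroDivisors.ne_zero hs₂0
  have hθs₂ : θ s₂ ≠ 0 := θne s₂ hs₂ne
  have hs' : θ s₂ * e = θ s₁ := by
    rw [← hs, mul_div_assoc']
    exact mul_div_cancel_left₀ _ hθs₂
  have hs₁ne : s₁ ≠ 0 := by
    intro h
    rw [h, map_zero] at hs'
    exact he0 ((mul_eq_zero.mp hs').resolve_left hθs₂)
  refine ⟨C s₂ * C m₂ * A, C s₂ * C m₁ * Bb, m₁ * m₂ * s₁,
    by simp [hm₁ne, hm₂ne, hs₁ne], mapinj ?_⟩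
  simp only [Polynomial.map_add, Polynomial.map_mul, Polynomial.map_C, hm₁', hm₂']
  have h9 : (C (θ s₂) * C (θ m₂) * (C (θ m₁) * EuclideanDomain.gcdA P' Q') * P.map θ +
      C (θ s₂) * C (θ m₁) * (C (θ m₂) * EuclideanDomain.gcdB P' Q') * Q.map θ)
      = C (θ m₁) * C (θ m₂) * C (θ s₂) *
        (P' * EuclideanDomain.gcdA P' Q' + Q' * EuclideanDomain.gcdB P' Q') := by
    rw [hP'def, hQ'def]; ring
  rw [h9, ← hbez]
  rw [← C_mul, ← C_mul, ← C_mul]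
  congr 1
  rw [map_mul, map_mul, ← hs']
  ring

end Bezout

section Key

variable {f g : Polynomial (Polynomial K)} {c : K}

theorem key [CharZero K] [IsAlgClosed K] (hc : c ≠ 0)
    (hJac : dx f * derivative g - derivative f * dx g = C (C c))
    (p : Polynomial (Polynomial K)) (hp : Prime p) (P Q : Polynomial (Polynomial K))
    (hP : P ≠ 0) (hQ : Q ≠ 0) (hrp : IsRelPrime P Q)
    (hpP : p ∣ phi f g P) (hpQ : p ∣ phi f g Q) : False := by
  classical
  haveI hsp : (Ideal.span ({p} : Set (Polynomial (Polynomial K)))).IsPrime :=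
    (Ideal.span_singleton_prime hp.ne_zero).mpr hp
  set I : Ideal (Polynomial (Polynomial K)) :=
    Ideal.comap (phi f g) (Ideal.span {p}) with hIdef
  have hIprime : I.IsPrime := Ideal.IsPrime.comap _
  have hPI : P ∈ I := Ideal.mem_comap.mpr (Ideal.mem_span_singleton.mpr hpP)
  have hQI : Q ∈ I := Ideal.mem_comap.mpr (Ideal.mem_span_singleton.mpr hpQ)
  obtain ⟨U, V, s, hs0, hUV⟩ := exists_C_combination P Q hP hQ hrp
  have hCs : (C s : Polynomial (Polynomial K)) ∈ I := by
    rw [← hUV]; exact I.add_mem (I.mul_mem_left U hPI) (I.mul_mem_left V hQI)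
  obtain ⟨a, haI⟩ := root_mem (C : Polynomial K →+* Polynomial (Polynomial K)) I hIprime s hs0 hCs
  have hfa : p ∣ f - algebraMap K (Polynomial (Polynomial K)) a := by
    have h1 := Ideal.mem_comap.mp haI
    have h2 : phi f g (C (X - C a)) = f - algebraMap K (Polynomial (Polynomial K)) a := by
      rw [phi_C, map_sub, aeval_X, aeval_C]
    rw [h2] at h1
    exact Ideal.mem_span_singleton.mp h1
  set ev : Polynomial (Polynomial K) →+* Polynomial K := mapRingHom (evalRingHom a) with hevdef
  have hevsurj : Function.Surjective ev :=
    Polynomial.map_surjective _ (fun k => ⟨C k, eval_C⟩)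
  have hevC : ev (C (X - C a)) = 0 := by
    rw [hevdef, coe_mapRingHom, Polynomial.map_C]
    simp
  have hker : RingHom.ker ev = Ideal.span {(C (X - C a) : Polynomial (Polynomial K))} := by
    ext z
    rw [RingHom.mem_ker, Ideal.mem_span_singleton]
    constructor
    · intro h
      refine (C_dvd_iff_dvd_coeff _ _).mpr (fun i => dvd_iff_isRoot.mpr ?_)
      have h3 : coeff (ev z) i = 0 := by rw [h]; simp
      rw [hevdef, coe_mapRingHom, coeff_map] at h3
      exact h3
    · rintro ⟨w, rfl⟩
      rw [map_mul, hevC, zero_mul]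
  have hkerle : RingHom.ker ev ≤ I := by
    rw [hker]; exact Ideal.span_le.mpr (by simpa using haI)
  set J := Ideal.map ev I with hJdef
  have hJprime : J.IsPrime := Ideal.map_isPrime_of_surjective hevsurj hkerle
  have hcomap : Ideal.comap ev J = I := by
    rw [hJdef, Ideal.comap_map_of_surjective ev hevsurj]
    exact sup_eq_left.mpr hkerle
  have hJne : J ≠ ⊤ := fun h => hIprime.ne_top (by rw [← hcomap, h, Ideal.comap_top])
  have hJbot : J ≠ ⊥ := by
    intro h
    have hIker : I = RingHom.ker ev := by rw [← hcomap, h]; rfl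
    have hdP : C (X - C a) ∣ P := Ideal.mem_span_singleton.mp (by rw [← hker, ← hIker]; exact hPI)
    have hdQ : C (X - C a) ∣ Q := Ideal.mem_span_singleton.mp (by rw [← hker, ← hIker]; exact hQI)
    have := isUnit_C.mp (hrp hdP hdQ)
    exact Polynomial.not_isUnit_X_sub_C a this
  obtain ⟨t, htJ, ht0⟩ := (Submodule.ne_bot_iff J).mp hJbot
  obtain ⟨b, hbJ⟩ := root_mem (RingHom.id (Polynomial K)) J hJprime t ht0 (by simpa using htJ)
  obtain ⟨w, hwI, hwev⟩ := (Ideal.mem_map_iff_of_surjective ev hevsurj).mp (by simpa using hbJ)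
  have hgb' : (X - C (C b) : Polynomial (Polynomial K)) ∈ I := by
    have hdiff : (X - C (C b) : Polynomial (Polynomial K)) - w ∈ RingHom.ker ev := by
      rw [RingHom.mem_ker, map_sub, hwev]
      have h5 : ev (X - C (C b)) = X - C b := by
        rw [map_sub, hevdef, coe_mapRingHom, Polynomial.map_C, Polynomial.map_X]
        simp
      rw [h5, sub_self]
    have h6 : (X - C (C b) : Polynomial (Polynomial K)) = ((X - C (C b)) - w) + w := by ring
    rw [h6]; exact I.add_mem (hkerle hdiff) hwI
  have hgb : p ∣ g - algebraMap K (Polynomial (Polynomial K)) b := by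
    have h1 := Ideal.mem_comap.mp hgb'
    have h2 : phi f g (X - C (C b)) = g - algebraMap K (Polynomial (Polynomial K)) b := by
      rw [map_sub, phi_X, phi_C, aeval_C]
    rw [h2] at h1
    exact Ideal.mem_span_singleton.mp h1
  exact core hc hJac p hp a b hfa hgb

end Key

section Adjoin

variable (f g : Polynomial (Polynomial K))

theorem phi_mem_adjoin (W : Polynomial (Polynomial K)) :
    phi f g W ∈ Algebra.adjoin K ({f, g} : Set (Polynomial (Polynomial K))) := by
  induction W using Polynomial.induction_on' with
  | add u v hu hv => rw [map_add]; exact add_mem hu hv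
  | monomial n q =>
    have hm : phi f g (monomial n q) = aeval f q * g ^ n := by
      rw [← C_mul_X_pow_eq_monomial, map_mul, phi_C, map_pow, phi_X]
    rw [hm]
    refine mul_mem ?_ (pow_mem (Algebra.subset_adjoin (by simp)) n)
    exact Algebra.adjoin_mono (Set.singleton_subset_iff.mpr (by simp))
      (Polynomial.aeval_mem_adjoin_singleton K f)

theorem adjoin_CX_X :
    Algebra.adjoin K ({C X, X} : Set (Polynomial (Polynomial K))) = ⊤ := by
  rw [eq_top_iff]
  suffices H : ∀ p : Polynomial (Polynomial K),
      p ∈ Algebra.adjoin K ({C X, X} : Set (Polynomial (Polynomial K))) from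
    fun p _ => H p
  intro p
  induction p using Polynomial.induction_on with
  | C q =>
    induction q using Polynomial.induction_on with
    | C k =>
      rw [← algMap_eq]
      exact Subalgebra.algebraMap_mem _ k
    | add u v hu hv => rw [C_add]; exact add_mem hu hv
    | monomial n a ha =>
      have : (C (C a * X ^ (n + 1)) : Polynomial (Polynomial K))
          = C (C a * X ^ n) * C X := by rw [← C_mul]; ring_nf
      rw [this]
      exact mul_mem ha (Algebra.subset_adjoin (by simp))
  | add u v hu hv => exact add_mem hu hv
  | monomial n a ha =>
    have : (C a * X ^ (n + 1) : Polynomial (Polynomial K))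
        = C a * X ^ n * X := by ring
    rw [this]
    exact mul_mem ha (Algebra.subset_adjoin (by simp))

end Adjoin

section Extract

variable {f g : Polynomial (Polynomial K)} {c : K}

theorem extract [CharZero K] [IsAlgClosed K] (hc : c ≠ 0)
    (hJac : dx f * derivative g - derivative f * dx g = C (C c))
    (z : Polynomial (Polynomial K)) (hz : z ≠ 0)
    (hmem : algebraMap (Polynomial (Polynomial K))
        (FractionRing (Polynomial (Polynomial K))) z ∈ subfieldGen f g) :
    z ∈ Algebra.adjoin K ({f, g} : Set (Polynomial (Polynomial K))) := by
  classical
  set L := FractionRing (Polynomial (Polynomial K)) with hL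
  set ι := algebraMap (Polynomial (Polynomial K)) L with hι
  have ιinj : Function.Injective ι := IsFractionRing.injective _ _
  rw [subfieldGen, Subfield.mem_closure_iff] at hmem
  obtain ⟨y, hy, w, hw, hyw⟩ := hmem
  set T : Subring L := (ι.comp (phi f g)).range with hT
  have hST : ∀ u ∈ (Set.range (fun k : K => ι (C (C k))) ∪ {ι f, ι g}), u ∈ T := by
    rintro u (⟨k, rfl⟩ | hu)
    · exact ⟨C (C k), by rw [RingHom.comp_apply, phi_const, algMap_eq]⟩
    · rcases hu with rfl | rfl
      · exact ⟨C X, by rw [RingHom.comp_apply, phi_CX]⟩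
      · exact ⟨X, by rw [RingHom.comp_apply, phi_X]⟩
  have hyT : y ∈ T := Subring.closure_le.mpr hST hy
  have hwT : w ∈ T := Subring.closure_le.mpr hST hw
  obtain ⟨P, hPz⟩ := hyT
  obtain ⟨Q, hQz⟩ := hwT
  have hw0 : w ≠ 0 := by
    intro h
    rw [h, div_zero] at hyw
    exact hz (ιinj (by rw [← hyw, map_zero]))
  rw [RingHom.comp_apply] at hPz hQz
  have hrel : phi f g P = z * phi f g Q := by
    apply ιinj
    rw [map_mul, hPz, hQz, ← hyw]
    exact (div_mul_cancel₀ y hw0).symm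
  have hφQ0 : phi f g Q ≠ 0 := fun h => hw0 (by rw [← hQz, h, map_zero])
  have hQ0 : Q ≠ 0 := fun h => hφQ0 (by rw [h, map_zero])
  have hφP0 : phi f g P ≠ 0 := by
    rw [hrel]
    exact mul_ne_zero hz hφQ0
  have hP0 : P ≠ 0 := fun h => hφP0 (by rw [h, map_zero])
  obtain ⟨P', Q', D, hrp, hDP, hDQ⟩ :=
    UniqueFactorizationMonoid.exists_reduced_factors' P Q hQ0
  have hD0 : D ≠ 0 := fun h => hP0 (by rw [← hDP, h, zero_mul])
  have hφD0 : phi f g D ≠ 0 := fun h =>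
    hD0 (phi_inj hc hJac D h)
  have hP'0 : P' ≠ 0 := fun h => hP0 (by rw [← hDP, h, mul_zero])
  have hQ'0 : Q' ≠ 0 := fun h => hQ0 (by rw [← hDQ, h, mul_zero])
  have hφ : phi f g P' = z * phi f g Q' := by
    have h1 : phi f g D * phi f g P' = z * (phi f g D * phi f g Q') := by
      rw [← map_mul, ← map_mul, hDP, hDQ, hrel]
    rw [mul_left_comm] at h1
    exact mul_left_cancel₀ hφD0 h1
  have hφP'0 : phi f g P' ≠ 0 := fun h => hP'0 (phi_inj hc hJac P' h)
  have hφQ'0 : phi f g Q' ≠ 0 := fun h => hQ'0 (phi_inj hc hJac Q' h)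
  have hQ'unit : IsUnit (phi f g Q') := by
    by_contra hun
    obtain ⟨q, hqirr, hqdvd⟩ := WfDvdMonoid.exists_irreducible_factor hun hφQ'0
    have hqprime : Prime q := UniqueFactorizationMonoid.irreducible_iff_prime.mp hqirr
    exact key hc hJac q hqprime P' Q' hP'0 hQ'0 hrp
      (by rw [hφ]; exact hqdvd.mul_left z) hqdvd
  obtain ⟨r, hr, hCr⟩ := Polynomial.isUnit_iff.mp hQ'unit
  obtain ⟨k, hk, hCk⟩ := Polynomial.isUnit_iff.mp hr
  have hk0 : k ≠ 0 := hk.ne_zero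
  have hzeq : z = phi f g (P' * C (C k⁻¹)) := by
    rw [map_mul, phi_C, aeval_C, hφ, ← hCr, ← hCk, algMap_eq, mul_assoc, ← C_mul, ← C_mul,
      mul_inv_cancel₀ hk0, C_1, C_1, mul_one]
  rw [hzeq]
  exact phi_mem_adjoin f g _

end Extract

end JacProof

open JacProof in
/-- For a Jacobian pair `(f, g)`: `K(f,g) = K(x,y)` if and only if `K[f,g] = K[x,y]`. -/
theorem field_gen_iff_ring_gen {K : Type*} [Field K] [IsAlgClosed K] [CharZero K]
    (f g : Polynomial (Polynomial K)) (hf : f.Monic) (hg : g.Monic)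
    (hfdeg : 1 ≤ f.natDegree) (hgdeg : 1 ≤ g.natDegree)
    (hJac : ∃ c : K, c ≠ 0 ∧
      dx f * Polynomial.derivative g - Polynomial.derivative f * dx g
        = Polynomial.C (Polynomial.C c)) :
    subfieldGen f g = ⊤ ↔ Algebra.adjoin K ({f, g} : Set (Polynomial (Polynomial K))) = ⊤ := by
  obtain ⟨c, hc, hJac⟩ := hJac
  constructor
  · intro hfield
    have hx : (C X : Polynomial (Polynomial K)) ∈
        Algebra.adjoin K ({f, g} : Set (Polynomial (Polynomial K))) :=
      extract hc hJac (C X) (C_ne_zero.mpr X_ne_zero) (by rw [hfield]; trivial)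
    have hy : (X : Polynomial (Polynomial K)) ∈
        Algebra.adjoin K ({f, g} : Set (Polynomial (Polynomial K))) :=
      extract hc hJac X X_ne_zero (by rw [hfield]; trivial)
    rw [eq_top_iff, ← adjoin_CX_X]
    refine Algebra.adjoin_le ?_
    rintro z (rfl | rfl)
    · exact hx
    · exact hy
  · intro hadj
    rw [eq_top_iff]
    intro z _
    obtain ⟨n, dnm, hdn, rfl⟩ :=
      IsFractionRing.div_surjective (A := Polynomial (Polynomial K)) z
    have hmem : ∀ w : Polynomial (Polynomial K),
        algebraMap (Polynomial (Polynomial K))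
          (FractionRing (Polynomial (Polynomial K))) w ∈ subfieldGen f g := by
      intro w
      have hw : w ∈ Algebra.adjoin K ({f, g} : Set (Polynomial (Polynomial K))) := by
        rw [hadj]; trivial
      refine Algebra.adjoin_induction ?_ ?_ ?_ ?_ hw
      · rintro x (rfl | rfl)
        · exact Subfield.subset_closure (Or.inr (Or.inl rfl))
        · exact Subfield.subset_closure (Or.inr (Or.inr rfl))
      · intro k
        exact Subfield.subset_closure (Or.inl ⟨k, congrArg _ (algMap_eq k).symm⟩)
      · intro x y _ _ hx hy
        rw [map_add]
        exact add_mem hx hy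
      · intro x y _ _ hx hy
        rw [map_mul]
        exact mul_mem hx hy
    exact div_mem (hmem _) (hmem _)

end
end

section
/- Let δ = (δ₀, δ₁, …, δ_h) be a characteristic δ-sequence with h ≥ 2, and let k be an integer with 2 ≤ k ≤ h. Then δ_k + M_k ∈ Γ(δ₁, …, δ_{k−1}), where M is the M-sequence of δ. -/
/-- Lemma 6.1(i): for a characteristic `δ`-sequence `(δ₀, …, δ_h)` with `h ≥ 2` and
`2 ≤ k ≤ h`, one has `δ_k + M_k ∈ Γ(δ₁, …, δ_{k−1})`, where `Γ(A)` is the additive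
submonoid of `ℤ` generated by `A` and `M` is the `M`-sequence of `δ`. -/
theorem delta_add_M_mem_semigroup (h : ℕ) (hh : 2 ≤ h) (δ : ℕ → ℕ)
    (hδpos : ∀ i ≤ h, 0 < δ i)
    (d : ℕ → ℕ) (hd : ∀ i, d i = (Finset.range i).gcd δ)
    (hlast : d (h + 1) = 1)
    (hdec : ∀ i, 1 ≤ i → i ≤ h → d (i + 1) < d i)
    (hsemi : ∀ i, 2 ≤ i → i ≤ h →
      ((δ i * (d i / d (i + 1)) : ℕ) : ℤ) ∈
        AddSubmonoid.closure ((fun j => (δ j : ℤ)) '' Set.Iio i))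
    (hineq : ∀ i, 2 ≤ i → i ≤ h → δ i < δ (i - 1) * (d (i - 1) / d i))
    (M : ℕ → ℤ) (hM1 : M 1 = -(δ 1 : ℤ))
    (hMi : ∀ i, 2 ≤ i → i ≤ h →
      M i = M (i - 1) + ((δ (i - 1) : ℤ) * ((d (i - 1) / d i : ℕ) : ℤ) - (δ i : ℤ)))
    (k : ℕ) (hk2 : 2 ≤ k) (hkh : k ≤ h) :
    (δ k : ℤ) + M k ∈
      AddSubmonoid.closure ((fun j => (δ j : ℤ)) '' Set.Icc 1 (k - 1)) := by
  -- positivity of d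
  have hd0 : ∀ i, 1 ≤ i → 0 < d i := by
    intro i hi
    rw [hd]
    have hdvd : (Finset.range i).gcd δ ∣ δ 0 :=
      Finset.gcd_dvd (Finset.mem_range.mpr hi)
    exact Nat.pos_of_dvd_of_pos hdvd (hδpos 0 (by omega))
  -- divisibility
  have hdvd : ∀ i, d (i + 1) ∣ d i := by
    intro i
    rw [hd, hd]
    apply Finset.dvd_gcd
    intro b hb
    exact Finset.gcd_dvd (Finset.mem_range.mpr (by
      exact lt_trans (Finset.mem_range.mp hb) (Nat.lt_succ_self i)))
  -- key rewriting of each increment as an nsmul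
  have key : ∀ i, 1 ≤ i →
      (δ i : ℤ) * ((d i / d (i + 1) : ℕ) : ℤ) - (δ i : ℤ)
        = (d i / d (i + 1) - 1) • (δ i : ℤ) := by
    intro i hi
    have hq1 : 1 ≤ d i / d (i + 1) :=
      Nat.one_le_div_iff (hd0 (i + 1) (by omega)) |>.mpr
        (Nat.le_of_dvd (hd0 i hi) (hdvd i))
    rw [nsmul_eq_mul]
    push_cast [Nat.cast_sub hq1]
    ring
  clear hlast hdec hsemi hineq
  induction k, hk2 using Nat.le_induction with
  | base =>
    have hM2 := hMi 2 le_rfl hh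
    simp only [show (2:ℕ)-1 = 1 from rfl] at hM2
    rw [hM2, hM1]
    have : (δ 2 : ℤ) + (-(δ 1 : ℤ) + ((δ 1 : ℤ) * ((d 1 / d 2 : ℕ) : ℤ) - (δ 2 : ℤ)))
        = (δ 1 : ℤ) * ((d 1 / d 2 : ℕ) : ℤ) - (δ 1 : ℤ) := by ring
    rw [this, key 1 le_rfl]
    exact AddSubmonoid.nsmul_mem _ (AddSubmonoid.subset_closure
      (Set.mem_image_of_mem (fun j => ((δ j : ℤ))) (show (1:ℕ) ∈ Set.Icc 1 (2-1) by norm_num))) _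
  | succ k hk IH =>
    have hkh' : k ≤ h := by omega
    have hMk := hMi (k + 1) (by omega) hkh
    simp only [Nat.add_sub_cancel] at hMk
    rw [hMk]
    have heq : (δ (k + 1) : ℤ) + (M k + ((δ k : ℤ) * ((d k / d (k + 1) : ℕ) : ℤ) - (δ (k + 1) : ℤ)))
        = ((δ k : ℤ) + M k) + ((δ k : ℤ) * ((d k / d (k + 1) : ℕ) : ℤ) - (δ k : ℤ)) := by
      ring
    rw [heq, key k (by omega)]
    apply AddSubmonoid.add_mem
    · refine AddSubmonoid.closure_mono ?_ (IH hkh')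
      apply Set.image_mono
      apply Set.Icc_subset_Icc_right
      omega
    · exact AddSubmonoid.nsmul_mem _ (AddSubmonoid.subset_closure
        (Set.mem_image_of_mem (fun j => ((δ j : ℤ))) (show k ∈ Set.Icc 1 (k+1-1) from Set.mem_Icc.mpr ⟨by omega, by omega⟩))) _
end

section
/- Let δ = (δ₀, δ₁, …, δ_h) be a characteristic δ-sequence with h ≥ 2, and let k be an integer with 2 ≤ k ≤ h. Then δ_k + M_k − δ₀ ∉ Γ(δ₀, δ₁, …, δ_{k−1}), where M is the M-sequence of δ. -/
/-- Lemma 6.1(ii): for a characteristic `δ`-sequence `(δ₀, …, δ_h)` with `h ≥ 2` and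
`2 ≤ k ≤ h`, one has `δ_k + M_k − δ₀ ∉ Γ(δ₀, δ₁, …, δ_{k−1})`, where `Γ(A)` is the
additive submonoid of `ℤ` generated by `A` and `M` is the `M`-sequence of `δ`. -/
theorem delta_add_M_sub_not_mem_semigroup (h : ℕ) (hh : 2 ≤ h) (δ : ℕ → ℕ)
    (hδpos : ∀ i ≤ h, 0 < δ i)
    (d : ℕ → ℕ) (hd : ∀ i, d i = (Finset.range i).gcd δ)
    (hlast : d (h + 1) = 1)
    (hdec : ∀ i, 1 ≤ i → i ≤ h → d (i + 1) < d i)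
    (hsemi : ∀ i, 2 ≤ i → i ≤ h →
      ((δ i * (d i / d (i + 1)) : ℕ) : ℤ) ∈
        AddSubmonoid.closure ((fun j => (δ j : ℤ)) '' Set.Iio i))
    (hineq : ∀ i, 2 ≤ i → i ≤ h → δ i < δ (i - 1) * (d (i - 1) / d i))
    (M : ℕ → ℤ) (hM1 : M 1 = -(δ 1 : ℤ))
    (hMi : ∀ i, 2 ≤ i → i ≤ h →
      M i = M (i - 1) + ((δ (i - 1) : ℤ) * ((d (i - 1) / d i : ℕ) : ℤ) - (δ i : ℤ)))
    (k : ℕ) (hk2 : 2 ≤ k) (hkh : k ≤ h) :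
    (δ k : ℤ) + M k - (δ 0 : ℤ) ∉
      AddSubmonoid.closure ((fun j => (δ j : ℤ)) '' Set.Iic (k - 1)) := by
  -- basic facts about d
  have hd' : ∀ i, d (i + 1) = Nat.gcd (δ i) (d i) := by
    intro i
    rw [hd, hd, Finset.range_add_one, Finset.gcd_insert]
    rfl
  have hdvd : ∀ i j, j < i → d i ∣ δ j := by
    intro i j hj
    rw [hd]
    exact Finset.gcd_dvd (Finset.mem_range.2 hj)
  have hdd : ∀ i, d (i + 1) ∣ d i := by
    intro i; rw [hd' i]; exact Nat.gcd_dvd_right _ _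
  have hdpos : ∀ i, 1 ≤ i → 0 < d i :=
    fun i hi => Nat.pos_of_dvd_of_pos (hdvd i 0 hi) (hδpos 0 (by omega))
  have hmul : ∀ i, (d i / d (i + 1)) * d (i + 1) = d i := fun i => Nat.div_mul_cancel (hdd i)
  -- membership in the closure is a nonnegative combination
  have hmem : ∀ (m : ℕ) (x : ℤ),
      x ∈ AddSubmonoid.closure ((fun j => (δ j : ℤ)) '' Set.Iio m) ↔
      ∃ c : ℕ → ℕ, x = ∑ i ∈ Finset.range m, (c i : ℤ) * (δ i : ℤ) := by
    intro m x
    constructor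
    · intro hx
      induction hx using AddSubmonoid.closure_induction with
      | mem y hy =>
        obtain ⟨j, hj, rfl⟩ := hy
        refine ⟨fun i => if i = j then 1 else 0, ?_⟩
        rw [Finset.sum_eq_single j]
        · simp
        · intro b _ hb; simp [hb]
        · intro hj'; exact absurd (Finset.mem_range.2 hj) hj'
      | zero => exact ⟨0, by simp⟩
      | add a b _ _ ha hb =>
        obtain ⟨c, hc⟩ := ha
        obtain ⟨c', hc'⟩ := hb
        refine ⟨fun i => c i + c' i, ?_⟩
        rw [hc, hc', ← Finset.sum_add_distrib]
        apply Finset.sum_congr rfl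
        intros; push_cast; ring
    · rintro ⟨c, rfl⟩
      apply AddSubmonoid.sum_mem
      intro i hi
      have : ((c i : ℤ)) * (δ i : ℤ) = (c i) • (δ i : ℤ) := by
        rw [nsmul_eq_mul]
      rw [this]
      have hgen : (δ i : ℤ) ∈ ((fun j => (δ j : ℤ)) '' Set.Iio m) :=
        ⟨i, Finset.mem_range.1 hi, rfl⟩
      exact AddSubmonoid.nsmul_mem _ (AddSubmonoid.subset_closure hgen) (c i)
  -- key reduction step
  have key : ∀ m, 1 ≤ m → m ≤ h → ∀ c : ℕ → ℕ,
      (∑ i ∈ Finset.range (m + 1), (c i : ℤ) * (δ i : ℤ)) =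
        (∑ i ∈ Finset.Ico 1 (m + 1), (((d i / d (i + 1) : ℕ) : ℤ) - 1) * (δ i : ℤ))
          - (δ 0 : ℤ) →
      ∃ t : ℕ,
        (∑ i ∈ Finset.range m, (c i : ℤ) * (δ i : ℤ))
            + (t : ℤ) * (((d m / d (m + 1) : ℕ) : ℤ) * (δ m : ℤ)) =
          (∑ i ∈ Finset.Ico 1 m, (((d i / d (i + 1) : ℕ) : ℤ) - 1) * (δ i : ℤ))
            - (δ 0 : ℤ) := by
    intro m h1 h2 c hc
    rw [Finset.sum_range_succ, Finset.sum_Ico_succ_top h1] at hc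
    have hdvdA : (d m : ℤ) ∣ ∑ i ∈ Finset.range m, (c i : ℤ) * (δ i : ℤ) :=
      Finset.dvd_sum fun i hi =>
        Dvd.dvd.mul_left (Int.natCast_dvd_natCast.2 (hdvd m i (Finset.mem_range.1 hi))) _
    have hdvdB : (d m : ℤ) ∣
        (∑ i ∈ Finset.Ico 1 m, (((d i / d (i + 1) : ℕ) : ℤ) - 1) * (δ i : ℤ)) - (δ 0 : ℤ) := by
      refine dvd_sub (Finset.dvd_sum fun i hi => ?_) ?_
      · exact Dvd.dvd.mul_left
          (Int.natCast_dvd_natCast.2 (hdvd m i (Finset.mem_Ico.1 hi).2)) _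
      · exact Int.natCast_dvd_natCast.2 (hdvd m 0 h1)
    have hdvdC : (d m : ℤ) ∣
        ((c m : ℤ) - (((d m / d (m + 1) : ℕ) : ℤ) - 1)) * (δ m : ℤ) := by
      have heq : ((c m : ℤ) - (((d m / d (m + 1) : ℕ) : ℤ) - 1)) * (δ m : ℤ) =
          ((∑ i ∈ Finset.Ico 1 m, (((d i / d (i + 1) : ℕ) : ℤ) - 1) * (δ i : ℤ)) - (δ 0 : ℤ))
            - (∑ i ∈ Finset.range m, (c i : ℤ) * (δ i : ℤ)) := by
        linear_combination hc
      rw [heq]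
      exact dvd_sub hdvdB hdvdA
    -- extract divisibility by n := d m / d (m+1)
    have hdk : 0 < d (m + 1) := hdpos _ (by omega)
    have hdmpos : 0 < d m := hdpos _ h1
    have hdvdδ : d (m + 1) ∣ δ m := by rw [hd' m]; exact Nat.gcd_dvd_left _ _
    have he : (δ m / d (m + 1)) * d (m + 1) = δ m := Nat.div_mul_cancel hdvdδ
    have hcop : Nat.Coprime (d m / d (m + 1)) (δ m / d (m + 1)) := by
      have hg : Nat.gcd (d m) (δ m) = d (m + 1) := by
        rw [Nat.gcd_comm]; exact (hd' m).symm
      have := Nat.coprime_div_gcd_div_gcd (m := d m) (n := δ m) (by rw [hg]; exact hdk)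
      rwa [hg] at this
    have hz : ((d m / d (m + 1) : ℕ) : ℤ) ∣ ((c m : ℤ) - (((d m / d (m + 1) : ℕ) : ℤ) - 1)) := by
      have hNK : ((d m / d (m + 1) : ℕ) : ℤ) * ((d (m + 1) : ℕ) : ℤ) = (d m : ℤ) := by
        exact_mod_cast congrArg (Nat.cast : ℕ → ℤ) (hmul m)
      have hEK : ((δ m / d (m + 1) : ℕ) : ℤ) * ((d (m + 1) : ℕ) : ℤ) = (δ m : ℤ) := by
        exact_mod_cast congrArg (Nat.cast : ℕ → ℤ) he
      have h1' : ((d m / d (m + 1) : ℕ) : ℤ) * ((d (m + 1) : ℕ) : ℤ) ∣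
          (((c m : ℤ) - (((d m / d (m + 1) : ℕ) : ℤ) - 1)) * ((δ m / d (m + 1) : ℕ) : ℤ))
            * ((d (m + 1) : ℕ) : ℤ) := by
        rw [hNK, mul_assoc, hEK]
        exact hdvdC
      have h2' : ((d m / d (m + 1) : ℕ) : ℤ) ∣
          ((c m : ℤ) - (((d m / d (m + 1) : ℕ) : ℤ) - 1)) * ((δ m / d (m + 1) : ℕ) : ℤ) := by
        have hne : ((d (m + 1) : ℕ) : ℤ) ≠ 0 := by positivity
        exact (mul_dvd_mul_iff_right hne).1 h1'
      exact (Nat.isCoprime_iff_coprime.2 hcop).dvd_of_dvd_mul_right h2'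
    obtain ⟨z, hz⟩ := hz
    have hn1 : 1 ≤ d m / d (m + 1) :=
      (Nat.one_le_div_iff hdk).2 (Nat.le_of_dvd hdmpos (hdd m))
    have hn1' : (1 : ℤ) ≤ ((d m / d (m + 1) : ℕ) : ℤ) := by exact_mod_cast hn1
    have hz0 : 0 ≤ z := by
      by_contra hneg
      push_neg at hneg
      have hz1 : z ≤ -1 := by omega
      have hcm : (0 : ℤ) ≤ (c m : ℤ) := Int.natCast_nonneg _
      nlinarith [mul_le_mul_of_nonneg_left hz1
        (show (0:ℤ) ≤ ((d m / d (m + 1) : ℕ) : ℤ) by positivity)]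
    refine ⟨z.toNat, ?_⟩
    rw [Int.toNat_of_nonneg hz0]
    linear_combination hc - (δ m : ℤ) * hz
  -- main induction
  have main : ∀ m, 2 ≤ m → m ≤ h → ∀ c : ℕ → ℕ,
      (∑ i ∈ Finset.range m, (c i : ℤ) * (δ i : ℤ)) ≠
        (∑ i ∈ Finset.Ico 1 m, (((d i / d (i + 1) : ℕ) : ℤ) - 1) * (δ i : ℤ))
          - (δ 0 : ℤ) := by
    intro m hm2
    induction m, hm2 using Nat.le_induction with
    | base =>
      intro _ c hc
      obtain ⟨t, ht⟩ := key 1 le_rfl (by omega) c hc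
      simp only [Finset.Ico_self, Finset.sum_empty, Finset.range_one,
        Finset.sum_singleton] at ht
      have hδ0 : (0 : ℤ) < (δ 0 : ℤ) := by exact_mod_cast hδpos 0 (by omega)
      have h1 : (0 : ℤ) ≤ (c 0 : ℤ) * (δ 0 : ℤ) := by positivity
      have h2 : (0 : ℤ) ≤ (t : ℤ) * (((d 1 / d 2 : ℕ) : ℤ) * (δ 1 : ℤ)) := by positivity
      linarith
    | succ m hm ih =>
      intro hmh c hc
      obtain ⟨t, ht⟩ := key m (by omega) (by omega) c hc
      have hs := hsemi m hm (by omega)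
      obtain ⟨c', hc'⟩ := (hmem m _).1 hs
      apply ih (by omega) (fun i => c i + t * c' i)
      have hsum : ∑ i ∈ Finset.range m, ((c i + t * c' i : ℕ) : ℤ) * (δ i : ℤ)
          = (∑ i ∈ Finset.range m, (c i : ℤ) * (δ i : ℤ))
            + (t : ℤ) * ∑ i ∈ Finset.range m, (c' i : ℤ) * (δ i : ℤ) := by
        rw [Finset.mul_sum, ← Finset.sum_add_distrib]
        apply Finset.sum_congr rfl
        intros; push_cast; ring
      rw [hsum, ← hc']
      push_cast
      push_cast at ht
      linarith
  -- relate δ k + M k to the explicit sum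
  have hSM : ∀ m, 1 ≤ m → m ≤ h → (δ m : ℤ) + M m =
      ∑ i ∈ Finset.Ico 1 m, (((d i / d (i + 1) : ℕ) : ℤ) - 1) * (δ i : ℤ) := by
    intro m hm1
    induction m, hm1 using Nat.le_induction with
    | base =>
      intro _
      simp only [Finset.Ico_self, Finset.sum_empty, hM1]
      ring
    | succ m hm ih =>
      intro hmh
      have hM := hMi (m + 1) (by omega) hmh
      simp only [Nat.add_sub_cancel] at hM
      rw [Finset.sum_Ico_succ_top hm, ← ih (by omega), hM]
      ring
  -- finish
  have hIic : Set.Iic (k - 1) = Set.Iio k := by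
    ext x
    simp only [Set.mem_Iic, Set.mem_Iio]
    omega
  rw [hIic]
  intro hx
  obtain ⟨c, hc⟩ := (hmem k _).1 hx
  refine main k hk2 hkh c ?_
  rw [← hc, ← hSM k (by omega) hkh]
end

section
/- Let m ≥ 1 and l ≥ 1 be integers, let c ∈ K be nonzero, and let p, q ∈ K[π] be polynomials with deg p = m and deg q = (l−1)·m + 1 satisfying the differential equation m·p(π)·q′(π) − m·(l−1)·p′(π)·q(π) = c·p(π)^l. Then there exists a ∈ K such that q(π) = (c/m)·(π − a)·p(π)^{l−1}. -/
open Polynomial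

private lemma aux_deriv' {K : Type*} [Field K] (p g : K[X]) (k : ℕ) :
    p * derivative (p ^ k * g) =
      p ^ k * (C (k : K) * derivative p * g + p * derivative g) := by
  cases k with
  | zero => simp
  | succ n =>
      rw [derivative_mul, derivative_pow, Nat.succ_sub_one]
      push_cast
      ring

/-- Lemma 6.2: let `m, l ≥ 1`, `c ≠ 0`, and let `p, q ∈ K[π]` with `deg p = m` and
`deg q = (l−1)m + 1` satisfy `m·p·q′ − m(l−1)·p′·q = c·pˡ`. Then
`q = (c/m)·(π − a)·p^{l−1}` for some `a ∈ K`. -/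
theorem special_ode_solution {K : Type*} [Field K] [IsAlgClosed K] [CharZero K]
    (m l : ℕ) (hm : 1 ≤ m) (hl : 1 ≤ l) (c : K) (hc : c ≠ 0)
    (p q : K[X]) (hp : p.natDegree = m) (hq : q.natDegree = (l - 1) * m + 1)
    (hode : C ((m : K)) * (p * derivative q)
        - C (((m * (l - 1) : ℕ) : K)) * (derivative p * q) = C c * p ^ l) :
    ∃ a : K, q = C (c / (m : K)) * (X - C a) * p ^ (l - 1) := by
  classical
  have hm0 : (m : K) ≠ 0 := Nat.cast_ne_zero.mpr (by omega)
  have hp0 : p ≠ 0 := fun h => by simp [h] at hp; omega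
  have hq0 : q ≠ 0 := fun h => by simp [h] at hq
  -- Step 1: for every α, (l-1) * rootMultiplicity α p ≤ rootMultiplicity α q
  have claim : ∀ α : K, (l - 1) * rootMultiplicity α p ≤ rootMultiplicity α q := by
    intro α
    by_contra hcon
    push_neg at hcon
    set r := rootMultiplicity α p with hr
    set s := rootMultiplicity α q with hs
    set u := p /ₘ (X - C α) ^ r with hud
    set v := q /ₘ (X - C α) ^ s with hvd
    have hu : (X - C α) ^ r * u = p := p.pow_mul_divByMonic_rootMultiplicity_eq α
    have hv : (X - C α) ^ s * v = q := q.pow_mul_divByMonic_rootMultiplicity_eq α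
    have hu0 : u.eval α ≠ 0 := eval_divByMonic_pow_rootMultiplicity_ne_zero α hp0
    have hv0 : v.eval α ≠ 0 := eval_divByMonic_pow_rootMultiplicity_ne_zero α hq0
    have Qd : (X - C α) * derivative q =
        (X - C α) ^ s * (C (s : K) * v + (X - C α) * derivative v) := by
      have := aux_deriv' (X - C α) v s
      rw [hv, derivative_X_sub_C] at this
      rw [this]; ring
    have Pd : (X - C α) * derivative p =
        (X - C α) ^ r * (C (r : K) * u + (X - C α) * derivative u) := by
      have := aux_deriv' (X - C α) u r
      rw [hu, derivative_X_sub_C] at this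
      rw [this]; ring
    have hE : (X - C α) ^ (r + s + 1) *
        (C ((m : K)) * (u * (C (s : K) * v + (X - C α) * derivative v))
          - C (((m * (l - 1) : ℕ) : K)) *
            ((C (r : K) * u + (X - C α) * derivative u) * v))
        = (X - C α) ^ 2 * (C c * p ^ l) := by
      linear_combination (X - C α) ^ 2 * hode
        - C ((m : K)) * (X - C α) * p * Qd
        + C (((m * (l - 1) : ℕ) : K)) * (X - C α) * q * Pd
        + C ((m : K)) * (X - C α) ^ (s + 1)
            * (C (s : K) * v + (X - C α) * derivative v) * hu
        - C (((m * (l - 1) : ℕ) : K)) * (X - C α) ^ (r + 1)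
            * (C (r : K) * u + (X - C α) * derivative u) * hv
    have hle : r + s + 2 ≤ r * l + 2 := by
      have h1 : s + 1 ≤ (l - 1) * r := hcon
      have h2 : (l - 1) * r = r * l - r := by
        rw [Nat.sub_one_mul, Nat.mul_comm]
      have h3 : r ≤ r * l := Nat.le_mul_of_pos_right r (by omega)
      omega
    have hdvd : (X - C α) ^ (r + s + 2) ∣ (X - C α) ^ (r + s + 1) *
        (C ((m : K)) * (u * (C (s : K) * v + (X - C α) * derivative v))
          - C (((m * (l - 1) : ℕ) : K)) *
            ((C (r : K) * u + (X - C α) * derivative u) * v)) := by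
      rw [hE]
      refine dvd_trans (pow_dvd_pow _ hle) ⟨C c * u ^ l, ?_⟩
      rw [← hu]; ring
    have hXW : (X - C α) ∣
        (C ((m : K)) * (u * (C (s : K) * v + (X - C α) * derivative v))
          - C (((m * (l - 1) : ℕ) : K)) *
            ((C (r : K) * u + (X - C α) * derivative u) * v)) := by
      have h2 : (X - C α) ^ (r + s + 1) * ((X - C α) * 1) ∣
          (X - C α) ^ (r + s + 1) *
            (C ((m : K)) * (u * (C (s : K) * v + (X - C α) * derivative v))
              - C (((m * (l - 1) : ℕ) : K)) *
                ((C (r : K) * u + (X - C α) * derivative u) * v)) := by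
        rw [mul_one, ← pow_succ]; exact hdvd
      have := (mul_dvd_mul_iff_left
        (pow_ne_zero (r + s + 1) (X_sub_C_ne_zero α))).mp h2
      simpa using this
    have hroot := (dvd_iff_isRoot).mp hXW
    simp only [IsRoot, eval_sub, eval_mul, eval_add, eval_C, eval_X, eval_pow,
      sub_self, zero_mul, mul_zero, add_zero] at hroot
    rw [Nat.cast_mul] at hroot
    have h6 : ((s : K) - ((l - 1 : ℕ) : K) * (r : K))
        * ((m : K) * (eval α u * eval α v)) = 0 := by
      linear_combination hroot
    rcases mul_eq_zero.mp h6 with h7 | h7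
    · have hcast : (s : K) = ((l - 1 : ℕ) : K) * (r : K) := by
        exact sub_eq_zero.mp h7
      have : s = (l - 1) * r := by exact_mod_cast hcast
      omega
    · rcases mul_eq_zero.mp h7 with h8 | h8
      · exact hm0 h8
      · rcases mul_eq_zero.mp h8 with h9 | h9
        · exact hu0 h9
        · exact hv0 h9
  have hdvd : p ^ (l - 1) ∣ q := by
    apply Splits.dvd_of_roots_le_roots (IsAlgClosed.splits _)
      (pow_ne_zero _ hp0)
    rw [roots_pow, Multiset.le_iff_count]
    intro α
    rw [Multiset.count_nsmul, count_roots, count_roots]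
    exact claim α
  obtain ⟨g, hg⟩ := hdvd
  obtain ⟨n, rfl⟩ : ∃ n, l = n + 1 := ⟨l - 1, by omega⟩
  simp only [Nat.add_sub_cancel] at hg hq hode ⊢
  have hg0 : g ≠ 0 := by rintro rfl; rw [mul_zero] at hg; exact hq0 hg
  have hdg : g.natDegree = 1 := by
    rw [hg, natDegree_mul (pow_ne_zero _ hp0) hg0, natDegree_pow, hp] at hq
    omega
  rw [hg] at hode
  have haux := aux_deriv' p g n
  simp only [Nat.cast_mul, map_mul] at hode
  have hcancel : (p ^ n * p) * (C ((m : K)) * derivative g)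
      = (p ^ n * p) * C c := by
    linear_combination hode - C ((m : K)) * haux
  have hgd : derivative g = C (c / (m : K)) := by
    have h2 := mul_left_cancel₀ (mul_ne_zero (pow_ne_zero _ hp0) hp0) hcancel
    exact mul_left_cancel₀ (fun h => hm0 (by simpa using (C_eq_zero.mp h)))
      (show C ((m : K)) * derivative g = C ((m : K)) * C (c / (m : K)) by
        rw [h2, ← C_mul, mul_div_cancel₀ _ hm0])
  have hrep : g = C (c / (m : K)) * X + C (g.coeff 0) := by
    have h1 := eq_X_add_C_of_natDegree_le_one (le_of_eq hdg)
    have hc1 : g.coeff 1 = c / (m : K) := by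
      have h2 : derivative g = C (g.coeff 1) := by
        conv_lhs => rw [h1]
        simp
      rw [hgd] at h2
      exact (C_injective h2).symm
    rw [← hc1]; exact h1
  refine ⟨-(g.coeff 0) * m / c, ?_⟩
  have hab : (c / (m : K)) * (-(g.coeff 0) * m / c) = -(g.coeff 0) := by
    field_simp
  have key : C (c / (m : K)) * (X - C (-(g.coeff 0) * m / c))
      = C (c / (m : K)) * X + C (g.coeff 0) := by
    rw [mul_sub, ← C_mul, hab, C_neg, sub_neg_eq_add]
  rw [hg, key]
  conv_lhs => rw [hrep]
  ring
end
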